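/- arXiv:2301.06623 — 7 statements merged into one kernel-verified Lean document; each statement's English description precedes it below -/
import Mathlib

section
/- Let d ≥ 3 and let ω_N be a non-empty subset of the cube U_d = {-1/√d, 1/√d}^d ⊂ S^{d-1}. Then ω_N is a spherical 3-design if and only if N is even and, for every set I of one, two, or three pairwise distinct coordinate indices, exactly half of the vectors in ω_N have an even number of negative coordinates with indices in I and exactly half have an odd number of negative coordinates with indices in I. -/
open MeasureTheory Metric
open scoped RealInnerProductSpace Pointwise ENNReal

noncomputable section

/-- `E n` is the Euclidean space `ℝ^n`; the unit sphere `S^{n-1}` is `Metric.sphere (0 : E n) 1`. -/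
abbrev E (n : ℕ) : Type := EuclideanSpace ℝ (Fin n)

/-- The surface area measure on the unit sphere of `ℝ^n`, normalized to be a probability
measure. -/
noncomputable def sphereUnif (n : ℕ) : Measure (sphere (0 : E n) 1) :=
  (((volume : Measure (E n)).toSphere) Set.univ)⁻¹ • (volume : Measure (E n)).toSphere

namespace CubeAux

variable {d : ℕ}

/-- map on the sphere induced by a linear isometry equiv -/
def sphMap (f : E d ≃ₗᵢ[ℝ] E d) (y : sphere (0 : E d) 1) : sphere (0 : E d) 1 :=
  ⟨f y, by
    have : ‖(y : E d)‖ = 1 := mem_sphere_zero_iff_norm.mp y.2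
    simpa [mem_sphere_zero_iff_norm] using this⟩

lemma continuous_sphMap (f : E d ≃ₗᵢ[ℝ] E d) : Continuous (sphMap f) :=
  Continuous.subtype_mk (f.continuous.comp continuous_subtype_val) _

lemma volume_preimage (f : E d ≃ₗᵢ[ℝ] E d) (B : Set (E d)) :
    volume (⇑f ⁻¹' B) = volume B := by
  have h1 : volume (⇑f.toHomeomorph.toMeasurableEquiv ⁻¹' B)
      = Measure.map f.toHomeomorph.toMeasurableEquiv volume B :=
    (MeasurableEquiv.map_apply _ B).symm
  have h2 : (⇑f.toHomeomorph.toMeasurableEquiv) = ⇑f := rfl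
  rw [h2] at h1
  rw [h1]
  rw [f.measurePreserving.map_eq]

lemma smul_preimage (f : E d ≃ₗᵢ[ℝ] E d) (A : Set (E d)) :
    Set.Ioo (0:ℝ) 1 • (⇑f ⁻¹' A) = ⇑f ⁻¹' (Set.Ioo (0:ℝ) 1 • A) := by
  ext z
  simp only [Set.mem_smul, Set.mem_preimage]
  constructor
  · rintro ⟨r, hr, a, ha, rfl⟩
    exact ⟨r, hr, f a, ha, (f.map_smul r a).symm⟩
  · rintro ⟨r, hr, b, hb, hz⟩
    refine ⟨r, hr, f.symm b, by simpa using hb, ?_⟩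
    apply f.injective
    rw [f.map_smul, f.apply_symm_apply, hz]

lemma image_preimage_sphMap (f : E d ≃ₗᵢ[ℝ] E d) (s : Set (sphere (0 : E d) 1)) :
    (Subtype.val '' (sphMap f ⁻¹' s)) = ⇑f ⁻¹' (Subtype.val '' s) := by
  ext z
  constructor
  · rintro ⟨y, hy, rfl⟩
    exact ⟨sphMap f y, hy, rfl⟩
  · rintro ⟨w, hw, hwz⟩
    have hz1 : z ∈ sphere (0 : E d) 1 := by
      have h1 : ‖(w : E d)‖ = 1 := mem_sphere_zero_iff_norm.mp w.2
      rw [hwz, f.norm_map] at h1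
      simpa [mem_sphere_zero_iff_norm] using h1
    refine ⟨⟨z, hz1⟩, ?_, rfl⟩
    show sphMap f ⟨z, hz1⟩ ∈ s
    have : sphMap f ⟨z, hz1⟩ = w := Subtype.ext hwz.symm
    rw [this]; exact hw

lemma map_sphMap_toSphere (f : E d ≃ₗᵢ[ℝ] E d) :
    Measure.map (sphMap f) ((volume : Measure (E d)).toSphere) =
      (volume : Measure (E d)).toSphere := by
  ext s hs
  rw [Measure.map_apply (continuous_sphMap f).measurable hs,
    Measure.toSphere_apply' _ (hs.preimage (continuous_sphMap f).measurable),
    Measure.toSphere_apply' _ hs, image_preimage_sphMap, smul_preimage, volume_preimage]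

lemma map_sphMap_sphereUnif (f : E d ≃ₗᵢ[ℝ] E d) :
    Measure.map (sphMap f) (sphereUnif d) = sphereUnif d := by
  unfold sphereUnif
  rw [Measure.map_smul, map_sphMap_toSphere]

lemma integral_comp_sphMap (f : E d ≃ₗᵢ[ℝ] E d) (g : sphere (0 : E d) 1 → ℝ)
    (hg : Continuous g) :
    ∫ y, g (sphMap f y) ∂(sphereUnif d) = ∫ y, g y ∂(sphereUnif d) := by
  conv_rhs => rw [← map_sphMap_sphereUnif f]
  rw [integral_map (continuous_sphMap f).measurable.aemeasurable
    hg.aestronglyMeasurable]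

end CubeAux

namespace CubeAux

variable {d : ℕ}

lemma toSphere_univ_ne_zero (hd : 0 < d) :
    ((volume : Measure (E d)).toSphere) Set.univ ≠ 0 := by
  rw [Measure.toSphere_apply_univ]
  have h1 : Module.finrank ℝ (E d) = d := finrank_euclideanSpace_fin
  rw [h1]
  have h2 : (0:ℝ≥0∞) < volume (ball (0 : E d) 1) := measure_ball_pos volume 0 one_pos
  intro h
  rcases mul_eq_zero.mp h with h | h
  · exact (Nat.cast_ne_zero.mpr hd.ne') h
  · exact h2.ne' h

lemma isProb (hd : 0 < d) : IsProbabilityMeasure (sphereUnif d) := by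
  constructor
  rw [sphereUnif, Measure.smul_apply, smul_eq_mul]
  exact ENNReal.inv_mul_cancel (toSphere_univ_ne_zero hd) (measure_ne_top _ _)

lemma coord_continuous (i : Fin d) :
    Continuous (fun y : sphere (0 : E d) 1 => (y : E d) i) :=
  (EuclideanSpace.proj (𝕜 := ℝ) i).continuous.comp continuous_subtype_val

lemma mono_continuous (α : Fin d → ℕ) :
    Continuous (fun y : sphere (0 : E d) 1 => ∏ i, ((y : E d) i) ^ (α i)) :=
  continuous_finset_prod _ fun i _ => (coord_continuous i).pow _

lemma integrable_cont (hd : 0 < d) {g : sphere (0 : E d) 1 → ℝ} (hg : Continuous g) :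
    Integrable g (sphereUnif d) := by
  haveI := isProb hd
  exact integrableOn_univ.mp (hg.continuousOn.integrableOn_compact isCompact_univ)

lemma odd_moment (hd : 0 < d) (i : Fin d) (α : Fin d → ℕ) (hodd : Odd (α i)) :
    ∫ y, ∏ j, ((y : E d) j) ^ (α j) ∂(sphereUnif d) = 0 := by
  classical
  set f : E d ≃ₗᵢ[ℝ] E d :=
    LinearIsometryEquiv.piLpCongrRight 2
      (fun j : Fin d => if j = i then (LinearIsometryEquiv.neg ℝ : ℝ ≃ₗᵢ[ℝ] ℝ)
        else LinearIsometryEquiv.refl ℝ ℝ) with hf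
  have hfy : ∀ (y : E d) (j : Fin d), f y j = if j = i then -(y j) else y j := by
    intro y j
    rcases eq_or_ne j i with rfl | h
    · simp [hf, LinearIsometryEquiv.piLpCongrRight_apply]
    · simp [hf, LinearIsometryEquiv.piLpCongrRight_apply, h]
  have key : ∀ y : sphere (0 : E d) 1,
      (∏ j, (((sphMap f y : sphere (0 : E d) 1) : E d) j) ^ (α j))
        = -∏ j, ((y : E d) j) ^ (α j) := by
    intro y
    have h1 : ∀ j, (((sphMap f y : sphere (0 : E d) 1) : E d) j) ^ (α j)
        = ((if j = i then (-1:ℝ) else 1) ^ (α j)) * ((y : E d) j) ^ (α j) := by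
      intro j
      have : ((sphMap f y : sphere (0 : E d) 1) : E d) j = (if j = i then (-1:ℝ) else 1) * (y : E d) j := by
        rw [show ((sphMap f y : sphere (0 : E d) 1) : E d) = f y from rfl, hfy]
        by_cases h : j = i <;> simp [h]
      rw [this, mul_pow]
    rw [Finset.prod_congr rfl fun j _ => h1 j, Finset.prod_mul_distrib]
    have h2 : (∏ j, ((if j = i then (-1:ℝ) else 1) ^ (α j))) = (-1:ℝ) ^ (α i) := by
      rw [Finset.prod_eq_single i]
      · simp
      · intro b _ hb; simp [hb]
      · simp
    rw [h2, Odd.neg_one_pow hodd]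
    ring
  have h3 := integral_comp_sphMap f (fun y => ∏ j, ((y : E d) j) ^ (α j)) (mono_continuous α)
  simp only [key] at h3
  rw [integral_neg] at h3
  linarith

lemma sum_sq_coord (y : sphere (0 : E d) 1) : ∑ i, ((y : E d) i) ^ 2 = 1 := by
  have h1 : ‖(y : E d)‖ = 1 := mem_sphere_zero_iff_norm.mp y.2
  rw [EuclideanSpace.norm_eq] at h1
  have h2 : ∑ i, ‖(y : E d) i‖ ^ 2 = 1 := by
    rw [← Real.sqrt_eq_one]; exact h1
  simpa [Real.norm_eq_abs, sq_abs] using h2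

lemma second_moment (hd : 0 < d) (i : Fin d) :
    ∫ y, ((y : E d) i) ^ 2 ∂(sphereUnif d) = 1 / d := by
  classical
  haveI := isProb hd
  have hswap : ∀ j : Fin d, ∫ y, ((y : E d) j) ^ 2 ∂(sphereUnif d)
      = ∫ y, ((y : E d) i) ^ 2 ∂(sphereUnif d) := by
    intro j
    set f : E d ≃ₗᵢ[ℝ] E d :=
      LinearIsometryEquiv.piLpCongrLeft 2 ℝ ℝ (Equiv.swap i j) with hf
    have h1 := integral_comp_sphMap f (fun y => ((y : E d) i) ^ 2)
      ((coord_continuous i).pow 2)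
    have h2 : ∀ y : sphere (0 : E d) 1,
        ((sphMap f y : sphere (0 : E d) 1) : E d) i = (y : E d) j := by
      intro y
      rw [show ((sphMap f y : sphere (0 : E d) 1) : E d) = f y from rfl]
      show (Equiv.piCongrLeft' (fun _ : Fin d => ℝ) (Equiv.swap i j) (y : E d)) i = (y : E d) j
      rw [Equiv.piCongrLeft'_apply, Equiv.symm_swap, Equiv.swap_apply_left]
    simp only [h2] at h1
    exact h1
  have hsum : ∑ j : Fin d, ∫ y, ((y : E d) j) ^ 2 ∂(sphereUnif d) = 1 := by
    rw [← integral_finset_sum _ (fun j _ => (integrable_cont hd ((coord_continuous j).pow 2) :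
      Integrable (fun y : sphere (0 : E d) 1 => ((y : E d) j) ^ 2) (sphereUnif d)))]
    simp only [sum_sq_coord]
    simp
  rw [Finset.sum_congr rfl fun j _ => hswap j, Finset.sum_const, nsmul_eq_mul, Finset.card_univ, Fintype.card_fin] at hsum
  have hd' : (d : ℝ) ≠ 0 := Nat.cast_ne_zero.mpr hd.ne'
  field_simp
  linarith

end CubeAux

namespace CubeAux

variable {d : ℕ}

lemma prod_sign (x : E d) (I : Finset (Fin d)) :
    (∏ i ∈ I, (if x i < 0 then (-1:ℝ) else 1)) =
      if Even ((I.filter fun i => x i < 0).card) then (1:ℝ) else -1 := by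
  classical
  rw [Finset.prod_ite, Finset.prod_const, Finset.prod_const, one_pow, mul_one]
  rcases Nat.even_or_odd ((I.filter fun i => x i < 0).card) with h | h
  · rw [h.neg_one_pow, if_pos h]
  · rw [h.neg_one_pow, if_neg (Nat.not_even_iff_odd.mpr h)]

lemma sgn_eq {c : ℝ} (hc : 0 < c) {t : ℝ} (ht : t = c ∨ t = -c) :
    t = (if t < 0 then (-1:ℝ) else 1) * c := by
  rcases ht with rfl | rfl
  · rw [if_neg (not_lt.mpr hc.le), one_mul]
  · rw [if_pos (neg_neg_iff_pos.mpr hc), neg_one_mul]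

lemma cube_pow_prod {c : ℝ} (hc : 0 < c) (x : E d) (hx : ∀ i, x i = c ∨ x i = -c)
    (α : Fin d → ℕ) :
    ∏ i, (x i) ^ (α i) =
      (if Even (((Finset.univ.filter fun i => ¬ Even (α i)).filter fun i => x i < 0).card)
        then (1:ℝ) else -1) * c ^ (∑ i, α i) := by
  classical
  have step : ∀ i, (x i) ^ (α i)
      = (if ¬ Even (α i) then (if x i < 0 then (-1:ℝ) else 1) else 1) * c ^ (α i) := by
    intro i
    rcases hx i with h | h
    · have h0 : ¬ x i < 0 := by rw [h]; exact not_lt.mpr hc.le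
      by_cases he : Even (α i) <;> rw [h] <;> simp [he, not_lt.mpr hc.le]
    · have h0 : x i < 0 := by rw [h]; exact neg_neg_iff_pos.mpr hc
      rw [h]
      by_cases he : Even (α i)
      · simp [he, he.neg_pow]
      · have ho : Odd (α i) := Nat.not_even_iff_odd.mp he
        rw [ho.neg_pow]
        simp [he, h0, neg_neg_iff_pos.mpr hc]
  calc ∏ i, (x i) ^ (α i)
      = ∏ i, ((if ¬ Even (α i) then (if x i < 0 then (-1:ℝ) else 1) else 1) * c ^ (α i)) :=
        Finset.prod_congr rfl fun i _ => step i
    _ = (∏ i, (if ¬ Even (α i) then (if x i < 0 then (-1:ℝ) else 1) else 1))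
          * ∏ i, c ^ (α i) := Finset.prod_mul_distrib
    _ = (∏ i ∈ Finset.univ.filter fun i => ¬ Even (α i), (if x i < 0 then (-1:ℝ) else 1))
          * c ^ (∑ i, α i) := by
        rw [← Finset.prod_filter, Finset.prod_pow_eq_pow_sum]
    _ = _ := by rw [prod_sign]

end CubeAux

open CubeAux

/-- `X` is a spherical `k`-design on the unit sphere of `ℝ^n`: all its points lie on the sphere
and every polynomial of total degree at most `k` has average over `X` equal to its average over
the sphere (with respect to the normalized surface area measure). -/
def IsSphericalDesign (n k : ℕ) (X : Finset (E n)) : Prop :=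
  (↑X : Set (E n)) ⊆ sphere (0 : E n) 1 ∧
    ∀ p : MvPolynomial (Fin n) ℝ, p.totalDegree ≤ k →
      (∑ x ∈ X, MvPolynomial.eval (fun i => x i) p) / (X.card : ℝ) =
        ∫ y, MvPolynomial.eval (fun i => (y : E n) i) p ∂(sphereUnif n)

/-- Lemma 3.2: a non-empty subset of the cube `{±1/√d}^d`, `d ≥ 3`, is a spherical `3`-design
iff its cardinality is even and, for every set `I` of one, two or three distinct indices,
exactly half of its vectors have an even number of negative coordinates with indices in `I`
and exactly half have an odd number of negative coordinates with indices in `I`. -/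
theorem cube_subset_three_design_iff (d : ℕ) (hd : 3 ≤ d) (X : Finset (E d)) (hne : X.Nonempty)
    (hcube : ∀ x ∈ X, ∀ i : Fin d, x i = 1 / Real.sqrt d ∨ x i = -(1 / Real.sqrt d)) :
    IsSphericalDesign d 3 X ↔
      (Even X.card ∧
        ∀ I : Finset (Fin d), (I.card = 1 ∨ I.card = 2 ∨ I.card = 3) →
          2 * (X.filter fun x => Even (I.filter fun i => x i < 0).card).card = X.card ∧
          2 * (X.filter fun x => ¬ Even (I.filter fun i => x i < 0).card).card = X.card) := by
  classical
  have hd0 : 0 < d := by omega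
  haveI := CubeAux.isProb (d := d) hd0
  set c : ℝ := 1 / Real.sqrt d with hcdef
  have hdR : (0:ℝ) < d := by exact_mod_cast hd0
  have hsqrt : 0 < Real.sqrt d := Real.sqrt_pos.mpr hdR
  have hcpos : 0 < c := by positivity
  have hc2 : c ^ 2 = 1 / d := by
    rw [hcdef, div_pow, one_pow, Real.sq_sqrt hdR.le]
  have hNpos : 0 < X.card := hne.card_pos
  have hN : (X.card : ℝ) ≠ 0 := Nat.cast_ne_zero.mpr hNpos.ne'
  have hsub : (↑X : Set (E d)) ⊆ sphere (0 : E d) 1 := by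
    intro x hx
    rw [Finset.mem_coe] at hx
    rw [mem_sphere_zero_iff_norm, EuclideanSpace.norm_eq]
    have h1 : ∀ i, ‖x i‖ ^ 2 = 1 / d := by
      intro i
      rw [Real.norm_eq_abs, sq_abs]
      rcases hcube x hx i with h | h
      · rw [h, hc2]
      · rw [h, neg_pow, Even.neg_one_pow (by norm_num), one_mul, hc2]
    rw [Finset.sum_congr rfl fun i _ => h1 i, Finset.sum_const, nsmul_eq_mul,
      Finset.card_univ, Fintype.card_fin]
    rw [mul_one_div, div_self hdR.ne', Real.sqrt_one]
  -- sum over X of a product over a finset I of coordinates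
  have hsumI : ∀ I : Finset (Fin d),
      ∑ x ∈ X, ∏ i ∈ I, x i
        = (((X.filter fun x => Even ((I.filter fun i => x i < 0).card)).card : ℝ)
          - ((X.filter fun x => ¬ Even ((I.filter fun i => x i < 0).card)).card : ℝ))
            * c ^ I.card := by
    intro I
    have hx1 : ∀ x ∈ X, ∏ i ∈ I, x i
        = (if Even ((I.filter fun i => x i < 0).card) then (1:ℝ) else -1) * c ^ I.card := by
      intro x hx
      calc ∏ i ∈ I, x i = ∏ i ∈ I, ((if x i < 0 then (-1:ℝ) else 1) * c) :=
            Finset.prod_congr rfl fun i _ => sgn_eq hcpos (hcube x hx i)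
        _ = (∏ i ∈ I, (if x i < 0 then (-1:ℝ) else 1)) * c ^ I.card := by
            rw [Finset.prod_mul_distrib, Finset.prod_const]
        _ = _ := by rw [prod_sign]
    rw [Finset.sum_congr rfl hx1, ← Finset.sum_mul]
    congr 1
    rw [Finset.sum_ite, Finset.sum_const, Finset.sum_const]
    simp only [nsmul_eq_mul, mul_one, mul_neg]
    ring
  -- sum over X of a monomial
  have hsum_prod : ∀ α : Fin d → ℕ,
      ∑ x ∈ X, ∏ i, (x i) ^ (α i)
        = (((X.filter fun x => Even ((((Finset.univ.filter fun i => ¬ Even (α i)).filter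
              fun i => x i < 0)).card)).card : ℝ)
          - ((X.filter fun x => ¬ Even ((((Finset.univ.filter fun i => ¬ Even (α i)).filter
              fun i => x i < 0)).card)).card : ℝ)) * c ^ (∑ i, α i) := by
    intro α
    rw [Finset.sum_congr rfl fun x hx => cube_pow_prod hcpos x (fun i => hcube x hx i) α,
      ← Finset.sum_mul]
    congr 1
    rw [Finset.sum_ite, Finset.sum_const, Finset.sum_const]
    simp only [nsmul_eq_mul, mul_one, mul_neg]
    ring
  constructor
  · rintro ⟨-, hdes⟩
    have key : ∀ I : Finset (Fin d), I.Nonempty → I.card ≤ 3 →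
        ∑ x ∈ X, ∏ i ∈ I, x i = 0 := by
      intro I hIne hI3
      obtain ⟨i0, hi0⟩ := hIne
      have hdeg : (∏ i ∈ I, MvPolynomial.X i : MvPolynomial (Fin d) ℝ).totalDegree ≤ 3 := by
        refine le_trans (MvPolynomial.totalDegree_finset_prod I _) ?_
        calc ∑ i ∈ I, (MvPolynomial.X i : MvPolynomial (Fin d) ℝ).totalDegree
            = ∑ _i ∈ I, 1 := Finset.sum_congr rfl fun i _ => MvPolynomial.totalDegree_X i
          _ = I.card := by rw [Finset.sum_const, smul_eq_mul, mul_one]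
          _ ≤ 3 := hI3
      have hp := hdes (∏ i ∈ I, MvPolynomial.X i) hdeg
      have heval : ∀ v : Fin d → ℝ,
          MvPolynomial.eval v (∏ i ∈ I, MvPolynomial.X i) = ∏ i ∈ I, v i := by
        intro v; rw [map_prod]; simp
      simp only [heval] at hp
      have hrw : ∀ y : sphere (0 : E d) 1,
          ∏ i ∈ I, (y : E d) i = ∏ i, ((y : E d) i) ^ (if i ∈ I then 1 else 0) := by
        intro y
        rw [Finset.prod_congr rfl (fun i (_ : i ∈ Finset.univ) => by
          by_cases h : i ∈ I <;> simp [h] :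
          ∀ i ∈ Finset.univ, ((y : E d) i) ^ (if i ∈ I then 1 else 0)
            = (if i ∈ I then (y : E d) i else 1)), Finset.prod_ite_mem, Finset.univ_inter]
      have hzero : ∫ y, ∏ i ∈ I, (y : E d) i ∂(sphereUnif d) = 0 := by
        rw [integral_congr_ae (Filter.Eventually.of_forall hrw)]
        exact odd_moment hd0 i0 (fun i => if i ∈ I then 1 else 0) (by simp [hi0])
      rw [hzero] at hp
      rcases div_eq_zero_iff.mp hp with h | h
      · exact h
      · exact absurd h hN
    have hAll : ∀ I : Finset (Fin d), (I.card = 1 ∨ I.card = 2 ∨ I.card = 3) →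
        2 * (X.filter fun x => Even (I.filter fun i => x i < 0).card).card = X.card ∧
        2 * (X.filter fun x => ¬ Even (I.filter fun i => x i < 0).card).card = X.card := by
      intro I hIcard
      have hIne : I.Nonempty := Finset.card_pos.mp (by omega)
      have h0 := key I hIne (by omega)
      rw [hsumI I] at h0
      have hc3 : c ^ I.card ≠ 0 := pow_ne_zero _ hcpos.ne'
      have h1 : ((X.filter fun x => Even ((I.filter fun i => x i < 0).card)).card : ℝ)
          = ((X.filter fun x => ¬ Even ((I.filter fun i => x i < 0).card)).card : ℝ) := by
        have := mul_eq_zero.mp h0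
        rcases this with h | h
        · linarith [sub_eq_zero.mp h]
        · exact absurd h hc3
      have h2 : (X.filter fun x => Even ((I.filter fun i => x i < 0).card)).card
          = (X.filter fun x => ¬ Even ((I.filter fun i => x i < 0).card)).card :=
        Nat.cast_inj.mp h1
      have h3 := Finset.card_filter_add_card_filter_not
        (s := X) (fun x => Even ((I.filter fun i => x i < 0).card))
      constructor
      · rw [two_mul]; nth_rewrite 2 [h2]; exact h3
      · rw [two_mul]; nth_rewrite 1 [← h2]; exact h3
    refine ⟨?_, hAll⟩
    obtain ⟨h1, -⟩ := hAll {⟨0, hd0⟩} (by simp)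
    exact ⟨_, by rw [← h1]; ring⟩
  · rintro ⟨-, hI⟩
    refine ⟨hsub, fun p hp => ?_⟩
    have hmono : ∀ α : Fin d →₀ ℕ, α ∈ p.support →
        (∑ x ∈ X, ∏ i, (x i) ^ (α i)) / (X.card : ℝ)
          = ∫ y, ∏ i, ((y : E d) i) ^ (α i) ∂(sphereUnif d) := by
      intro α hα
      have hdeg : ∑ i, α i ≤ 3 := by
        have h1 := MvPolynomial.le_totalDegree hα
        have h2 : (α.sum fun _ e => e) = ∑ i, α i :=
          Finsupp.sum_fintype _ _ (fun _ => rfl)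
        rw [h2] at h1
        exact le_trans h1 hp
      rcases (Finset.univ.filter fun i => ¬ Even (α i)).eq_empty_or_nonempty with hJe | hJne
      · -- all exponents even
        have hev : ∀ i, Even (α i) := by
          intro i
          by_contra h
          have : i ∈ Finset.univ.filter fun i => ¬ Even (α i) :=
            Finset.mem_filter.mpr ⟨Finset.mem_univ i, h⟩
          rw [hJe] at this
          simp at this
        have hL : ∑ x ∈ X, ∏ i, (x i) ^ (α i) = (X.card : ℝ) * c ^ (∑ i, α i) := by
          have hterm : ∀ x ∈ X, ∏ i, (x i) ^ (α i) = c ^ (∑ i, α i) := by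
            intro x hx
            rw [← Finset.prod_pow_eq_pow_sum]
            refine Finset.prod_congr rfl fun i _ => ?_
            rcases hcube x hx i with h | h
            · rw [h]
            · rw [h, (hev i).neg_pow]
          rw [Finset.sum_congr rfl hterm, Finset.sum_const, nsmul_eq_mul]
        rw [hL, mul_comm, mul_div_assoc, div_self hN, mul_one]
        have heS : Even (∑ i, α i) := by
          choose k hk using fun i => hev i
          refine ⟨∑ i, k i, ?_⟩
          rw [← Finset.sum_add_distrib]
          exact Finset.sum_congr rfl fun i _ => hk i
        obtain ⟨m, hm⟩ := heS
        have hcase : (∑ i, α i) = 0 ∨ (∑ i, α i) = 2 := by omega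
        rcases hcase with hs | hs
        · have hall0 : ∀ i, α i = 0 := by
            intro i
            have := Finset.sum_eq_zero_iff.mp hs i (Finset.mem_univ i)
            exact this
          rw [hs, pow_zero]
          have : ∀ y : sphere (0 : E d) 1, ∏ i, ((y : E d) i) ^ (α i) = 1 := by
            intro y
            refine Finset.prod_eq_one fun i _ => by rw [hall0 i, pow_zero]
          rw [integral_congr_ae (Filter.Eventually.of_forall this)]
          simp
        · -- sum = 2, so α = 2·eᵢ
          obtain ⟨i1, hi1⟩ : ∃ i, α i ≠ 0 := by
            by_contra h
            push_neg at h
            have : ∑ i, α i = 0 := Finset.sum_eq_zero fun i _ => h i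
            omega
          have hle : α i1 ≤ 2 := by
            rw [← hs]
            exact Finset.single_le_sum (fun i _ => Nat.zero_le _) (Finset.mem_univ i1)
          have hα2 : α i1 = 2 := by
            rcases hev i1 with ⟨r, hr⟩
            omega
          have hrest : ∀ j, j ≠ i1 → α j = 0 := by
            intro j hj
            have h4 : ∑ i ∈ Finset.univ.erase i1, α i = 0 := by
              have h5 := Finset.add_sum_erase Finset.univ α (Finset.mem_univ i1)
              omega
            exact Finset.sum_eq_zero_iff.mp h4 j (Finset.mem_erase.mpr ⟨hj, Finset.mem_univ j⟩)
          have hrw2 : ∀ y : sphere (0 : E d) 1,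
              ∏ i, ((y : E d) i) ^ (α i) = ((y : E d) i1) ^ 2 := by
            intro y
            rw [Finset.prod_eq_single i1 (fun j _ hj => by rw [hrest j hj, pow_zero])
              (fun h => absurd (Finset.mem_univ i1) h), hα2]
          rw [integral_congr_ae (Filter.Eventually.of_forall hrw2), second_moment hd0 i1,
            hs, ← hc2]
      · -- some odd exponent
        obtain ⟨i0, hi0⟩ := hJne
        have hodd : Odd (α i0) := by
          have := Finset.mem_filter.mp hi0
          exact Nat.not_even_iff_odd.mp this.2
        rw [odd_moment hd0 i0 α hodd, hsum_prod α]
        have hJcard : (Finset.univ.filter fun i => ¬ Even (α i)).card = 1 ∨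
            (Finset.univ.filter fun i => ¬ Even (α i)).card = 2 ∨
            (Finset.univ.filter fun i => ¬ Even (α i)).card = 3 := by
          have h1 : 1 ≤ (Finset.univ.filter fun i => ¬ Even (α i)).card :=
            Finset.card_pos.mpr ⟨i0, hi0⟩
          have h2 : (Finset.univ.filter fun i => ¬ Even (α i)).card ≤ ∑ i, α i := by
            calc (Finset.univ.filter fun i => ¬ Even (α i)).card
                = ∑ i ∈ Finset.univ.filter fun i => ¬ Even (α i), 1 := by
                  rw [Finset.sum_const, smul_eq_mul, mul_one]
              _ ≤ ∑ i ∈ Finset.univ.filter fun i => ¬ Even (α i), α i :=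
                  Finset.sum_le_sum fun i hi => by
                    have := (Finset.mem_filter.mp hi).2
                    have : α i ≠ 0 := fun h => this (h ▸ Even.zero)
                    omega
              _ ≤ ∑ i, α i := Finset.sum_le_sum_of_subset (Finset.filter_subset _ _)
          omega
        obtain ⟨hE, hO⟩ := hI _ hJcard
        have h3 := Finset.card_filter_add_card_filter_not
          (s := X) (fun x => Even ((((Finset.univ.filter fun i => ¬ Even (α i)).filter
            fun i => x i < 0)).card))
        have heq : ((X.filter fun x => Even ((((Finset.univ.filter fun i => ¬ Even (α i)).filter
              fun i => x i < 0)).card)).card : ℝ)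
            = ((X.filter fun x => ¬ Even ((((Finset.univ.filter fun i => ¬ Even (α i)).filter
              fun i => x i < 0)).card)).card : ℝ) := by
          have : (X.filter fun x => Even ((((Finset.univ.filter fun i => ¬ Even (α i)).filter
              fun i => x i < 0)).card)).card
              = (X.filter fun x => ¬ Even ((((Finset.univ.filter fun i => ¬ Even (α i)).filter
              fun i => x i < 0)).card)).card :=
            Nat.eq_of_mul_eq_mul_left two_pos (hE.trans hO.symm)
          exact_mod_cast Nat.cast_inj.mpr this
        rw [heq, sub_self, zero_mul, zero_div]
    -- now expand the polynomial
    have hLHS : (∑ x ∈ X, MvPolynomial.eval (fun i => x i) p) / (X.card : ℝ)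
        = ∑ α ∈ p.support, p.coeff α * ((∑ x ∈ X, ∏ i, (x i) ^ (α i)) / (X.card : ℝ)) := by
      simp only [MvPolynomial.eval_eq']
      rw [Finset.sum_comm, Finset.sum_div]
      exact Finset.sum_congr rfl fun α _ => by rw [← Finset.mul_sum, mul_div_assoc]
    have hRHS : ∫ y, MvPolynomial.eval (fun i => (y : E d) i) p ∂(sphereUnif d)
        = ∑ α ∈ p.support, p.coeff α * ∫ y, ∏ i, ((y : E d) i) ^ (α i) ∂(sphereUnif d) := by
      simp only [MvPolynomial.eval_eq']
      rw [integral_finset_sum _ (fun (α : Fin d →₀ ℕ) _ =>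
        (integrable_cont hd0 (continuous_const.mul (mono_continuous (fun i => α i))) :
          Integrable (fun y : sphere (0 : E d) 1 => p.coeff α * ∏ i, ((y : E d) i) ^ (α i)) (sphereUnif d)))]
      exact Finset.sum_congr rfl fun α _ => integral_const_mul _ _
    rw [hLHS, hRHS]
    exact Finset.sum_congr rfl fun α hα => by rw [hmono α hα]
end
end

section
/- For every d ≥ 4, the d-demicube ω̄^d is 2-stiff; that is, ω̄^d is a spherical 3-design on S^{d-1} and there exists a point z ∈ S^{d-1} forming at most 2 distinct dot products with the points of ω̄^d. -/
open MeasureTheory Metric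
open scoped RealInnerProductSpace

noncomputable section

/-- `Dm n m X` is the set of points `z` of the unit sphere of `ℝ^n` forming at most `m`
distinct dot products with the points of `X`. -/
def Dm (n m : ℕ) (X : Set (E n)) : Set (E n) :=
  {z | z ∈ sphere (0 : E n) 1 ∧ ∃ T : Finset ℝ, T.card ≤ m ∧ ∀ x ∈ X, ⟪z, x⟫ ∈ T}

/-- `X` is an `m`-stiff configuration on the unit sphere of `ℝ^n`: it is a spherical
`(2m-1)`-design and some point of the sphere forms at most `m` distinct dot products with the
points of `X`. -/
def IsStiff (n m : ℕ) (X : Finset (E n)) : Prop :=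
  IsSphericalDesign n (2 * m - 1) X ∧ (Dm n m ↑X).Nonempty

/-- The `d`-demicube: the `2^(d-1)` points `(±1/√d, …, ±1/√d)` of `S^{d-1} ⊂ ℝ^d` having an
even number of minus signs. -/
noncomputable def demicube (d : ℕ) : Finset (E d) :=
  letI : DecidableEq (E d) := Classical.decEq _
  ((Finset.univ : Finset (Fin d → Bool)).filter fun ε =>
      Even (Finset.univ.filter fun i => ε i = true).card).image
    (fun ε => (WithLp.toLp 2 (fun i => if ε i then -(1 / Real.sqrt d) else 1 / Real.sqrt d) : E d))

open scoped Pointwise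

namespace DemiAux

variable {n : ℕ}

/-- The map on the unit sphere induced by a linear isometry equivalence. -/
def sphereMap (e : E n ≃ₗᵢ[ℝ] E n) (y : sphere (0 : E n) 1) : sphere (0 : E n) 1 :=
  ⟨e y, by
    have hy : ‖(y : E n)‖ = 1 := by simpa using mem_sphere_zero_iff_norm.1 y.2
    simp [mem_sphere_zero_iff_norm, e.norm_map, hy]⟩

lemma continuous_sphereMap (e : E n ≃ₗᵢ[ℝ] E n) : Continuous (sphereMap e) :=
  Continuous.subtype_mk (e.continuous.comp continuous_subtype_val) _

lemma val_image_preimage (e : E n ≃ₗᵢ[ℝ] E n) (s : Set (sphere (0 : E n) 1)) :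
    Subtype.val '' (sphereMap e ⁻¹' s) = ⇑e ⁻¹' (Subtype.val '' s) := by
  ext x
  constructor
  · rintro ⟨y, hy, rfl⟩
    exact ⟨sphereMap e y, hy, rfl⟩
  · rintro ⟨z, hz, hze⟩
    have hx : x ∈ sphere (0 : E n) 1 := by
      have : ‖e x‖ = 1 := by
        rw [← hze]; simpa using mem_sphere_zero_iff_norm.1 z.2
      rw [e.norm_map] at this
      simpa [mem_sphere_zero_iff_norm] using this
    refine ⟨⟨x, hx⟩, ?_, rfl⟩
    have : sphereMap e ⟨x, hx⟩ = z := Subtype.ext hze.symm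
    rw [Set.mem_preimage, this]; exact hz

lemma smul_preimage (e : E n ≃ₗᵢ[ℝ] E n) (A : Set (E n)) :
    Set.Ioo (0 : ℝ) 1 • (⇑e ⁻¹' A) = ⇑e ⁻¹' (Set.Ioo (0 : ℝ) 1 • A) := by
  ext x
  simp only [Set.mem_smul, Set.mem_preimage]
  constructor
  · rintro ⟨r, hr, a, ha, rfl⟩
    exact ⟨r, hr, e a, ha, (e.map_smul r a).symm⟩
  · rintro ⟨r, hr, a, ha, hax⟩
    refine ⟨r, hr, e.symm a, by simpa using ha, ?_⟩
    apply e.injective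
    rw [e.map_smul]
    simpa using hax

lemma map_toSphere (e : E n ≃ₗᵢ[ℝ] E n) :
    Measure.map (sphereMap e) (volume : Measure (E n)).toSphere
      = (volume : Measure (E n)).toSphere := by
  ext s hs
  rw [Measure.map_apply (continuous_sphereMap e).measurable hs,
    Measure.toSphere_apply' _ (hs.preimage (continuous_sphereMap e).measurable),
    Measure.toSphere_apply' _ hs, val_image_preimage, smul_preimage]
  congr 1
  have hme : Measure.map (⇑e) (volume : Measure (E n)) = volume :=
    e.measurePreserving.map_eq
  have hcoe : ⇑(e.toHomeomorph.toMeasurableEquiv) = ⇑e := rfl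
  calc (volume : Measure (E n)) (⇑e ⁻¹' (Set.Ioo (0:ℝ) 1 • (Subtype.val '' s)))
      = Measure.map (⇑(e.toHomeomorph.toMeasurableEquiv)) (volume : Measure (E n))
          (Set.Ioo (0:ℝ) 1 • (Subtype.val '' s)) := by
        rw [(e.toHomeomorph.toMeasurableEquiv).map_apply, hcoe]
    _ = _ := by rw [hcoe, hme]

lemma map_sphereUnif (e : E n ≃ₗᵢ[ℝ] E n) :
    Measure.map (sphereMap e) (sphereUnif n) = sphereUnif n := by
  unfold sphereUnif
  rw [Measure.map_smul, map_toSphere]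

lemma integral_comp_sphereMap (e : E n ≃ₗᵢ[ℝ] E n) {f : sphere (0 : E n) 1 → ℝ}
    (hf : Continuous f) :
    ∫ y, f (sphereMap e y) ∂(sphereUnif n) = ∫ y, f y ∂(sphereUnif n) := by
  conv_rhs => rw [← map_sphereUnif e]
  rw [integral_map (continuous_sphereMap e).measurable.aemeasurable
    hf.aestronglyMeasurable]


/-- Signed permutation of coordinates as a linear isometry equivalence. -/
def signedPerm (σ : Equiv.Perm (Fin n)) (s : Fin n → ℝ) (hs : ∀ i, s i * s i = 1) :
    E n ≃ₗᵢ[ℝ] E n where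
  toLinearEquiv :=
  { toFun := fun x => (WithLp.toLp 2 (fun i => s i * x (σ i)) : E n)
    invFun := fun y => (WithLp.toLp 2 (fun i => s (σ.symm i) * y (σ.symm i)) : E n)
    map_add' := by
      intro x y; ext i
      simp [PiLp.add_apply, mul_add]
    map_smul' := by
      intro c x; ext i
      simp [PiLp.smul_apply, smul_eq_mul]; ring
    left_inv := by
      intro x; ext i
      simp only [PiLp.toLp_apply]
      rw [Equiv.apply_symm_apply, ← mul_assoc, hs, one_mul]
    right_inv := by
      intro y; ext i
      simp only [PiLp.toLp_apply]
      rw [Equiv.symm_apply_apply, ← mul_assoc, hs, one_mul] }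
  norm_map' := by
    intro x
    rw [EuclideanSpace.norm_eq, EuclideanSpace.norm_eq]
    congr 1
    have : ∀ i, ‖s i * x (σ i)‖ ^ 2 = ‖x (σ i)‖ ^ 2 := by
      intro i
      rw [norm_mul, mul_pow, Real.norm_eq_abs, sq_abs, sq, hs, one_mul]
    calc ∑ i, ‖s i * x (σ i)‖ ^ 2 = ∑ i, ‖x (σ i)‖ ^ 2 := by
          exact Finset.sum_congr rfl fun i _ => this i
      _ = ∑ i, ‖x i‖ ^ 2 := Equiv.sum_comp σ (fun i => ‖x i‖ ^ 2)

lemma signedPerm_apply (σ : Equiv.Perm (Fin n)) (s : Fin n → ℝ) (hs : ∀ i, s i * s i = 1)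
    (x : E n) (i : Fin n) : signedPerm σ s hs x i = s i * x (σ i) := rfl

instance sphereUnif_finite : IsFiniteMeasure (sphereUnif n) := by
  constructor
  unfold sphereUnif
  rw [Measure.smul_apply, smul_eq_mul]
  exact lt_of_le_of_lt (ENNReal.inv_mul_le_one _) ENNReal.one_lt_top

lemma sphereUnif_prob (hn : 0 < n) : IsProbabilityMeasure (sphereUnif n) := by
  constructor
  unfold sphereUnif
  rw [Measure.smul_apply, smul_eq_mul]
  refine ENNReal.inv_mul_cancel ?_ (measure_ne_top _ _)
  rw [Measure.toSphere_apply_univ]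
  refine mul_ne_zero ?_ (measure_ball_pos _ _ one_pos).ne'
  simp [finrank_euclideanSpace, hn.ne']

lemma integrable_cont {f : sphere (0 : E n) 1 → ℝ} (hf : Continuous f) :
    Integrable f (sphereUnif n) := by
  rw [← integrableOn_univ]
  exact hf.continuousOn.integrableOn_compact isCompact_univ

lemma continuous_coord (i : Fin n) : Continuous (fun y : sphere (0 : E n) 1 => (y : E n) i) :=
  (EuclideanSpace.proj i).continuous.comp continuous_subtype_val

lemma continuous_monomial (v : Fin n →₀ ℕ) :
    Continuous (fun y : sphere (0 : E n) 1 => ∏ i, ((y : E n) i) ^ v i) :=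
  continuous_finset_prod _ fun i _ => (continuous_coord i).pow _

/-- Integral of a monomial with an odd exponent vanishes. -/
lemma integral_monomial_odd (v : Fin n →₀ ℕ) (i : Fin n) (hi : Odd (v i)) :
    ∫ y, (∏ j, ((y : E n) j) ^ v j) ∂(sphereUnif n) = 0 := by
  classical
  set sgn : Fin n → ℝ := fun j => if j = i then -1 else 1 with hsgn
  have hs : ∀ j, sgn j * sgn j = 1 := by
    intro j; by_cases h : j = i <;> simp [hsgn, h]
  set e := signedPerm 1 sgn hs
  have key : ∀ y : sphere (0 : E n) 1,
      (∏ j, ((sphereMap e y : E n) j) ^ v j) = -(∏ j, ((y : E n) j) ^ v j) := by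
    intro y
    have h1 : ∀ j, ((sphereMap e y : E n) j) = sgn j * (y : E n) j := by
      intro j
      show (e (y : E n)) j = _
      rw [signedPerm_apply]
      rfl
    calc ∏ j, ((sphereMap e y : E n) j) ^ v j
        = ∏ j, (sgn j ^ v j * ((y : E n) j) ^ v j) := by
          refine Finset.prod_congr rfl fun j _ => ?_
          rw [h1, mul_pow]
      _ = (∏ j, sgn j ^ v j) * ∏ j, ((y : E n) j) ^ v j := Finset.prod_mul_distrib
      _ = -(∏ j, ((y : E n) j) ^ v j) := by
          have : (∏ j, sgn j ^ v j) = -1 := by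
            have : ∀ j, sgn j ^ v j = if j = i then (-1 : ℝ) ^ v j else 1 := by
              intro j; by_cases h : j = i <;> simp [hsgn, h]
            rw [Finset.prod_congr rfl fun j _ => this j]
            rw [Finset.prod_ite_eq' Finset.univ i (fun j => (-1 : ℝ) ^ v j)]
            simp [hi.neg_one_pow]
          rw [this, neg_one_mul]
  have := integral_comp_sphereMap e (continuous_monomial v)
  rw [integral_congr_ae (Filter.Eventually.of_forall key)] at this
  rw [integral_neg] at this
  linarith

/-- All second moments are equal. -/
lemma integral_sq_eq (i j : Fin n) :
    ∫ y, ((y : E n) i) ^ 2 ∂(sphereUnif n) = ∫ y, ((y : E n) j) ^ 2 ∂(sphereUnif n) := by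
  classical
  set e := signedPerm (Equiv.swap i j) (fun _ => 1) (fun _ => one_mul 1)
  have key : ∀ y : sphere (0 : E n) 1,
      ((sphereMap e y : E n) i) ^ 2 = ((y : E n) j) ^ 2 := by
    intro y
    have : ((sphereMap e y : E n) i) = (y : E n) j := by
      show (e (y : E n)) i = _
      rw [signedPerm_apply, one_mul, Equiv.swap_apply_left]
    rw [this]
  have h2 : Continuous (fun y : sphere (0 : E n) 1 => ((y : E n) i) ^ 2) :=
    (continuous_coord i).pow 2
  have := integral_comp_sphereMap e h2
  rw [integral_congr_ae (Filter.Eventually.of_forall key)] at this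
  exact this.symm

lemma sum_sq_coord (y : sphere (0 : E n) 1) : ∑ i, ((y : E n) i) ^ 2 = 1 := by
  have hy : ‖(y : E n)‖ = 1 := by simpa using mem_sphere_zero_iff_norm.1 y.2
  have := EuclideanSpace.norm_eq (y : E n)
  rw [hy] at this
  have h2 : ∑ i, ‖(y : E n) i‖ ^ 2 = 1 := by
    have hnn : 0 ≤ ∑ i, ‖(y : E n) i‖ ^ 2 :=
      Finset.sum_nonneg fun i _ => sq_nonneg _
    nlinarith [Real.sq_sqrt hnn, Real.sqrt_nonneg (∑ i, ‖(y : E n) i‖ ^ 2)]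
  calc ∑ i, ((y : E n) i) ^ 2 = ∑ i, ‖(y : E n) i‖ ^ 2 :=
        Finset.sum_congr rfl fun i _ => by rw [Real.norm_eq_abs, sq_abs]
    _ = 1 := h2

lemma integral_sq (hn : 0 < n) (i : Fin n) :
    ∫ y, ((y : E n) i) ^ 2 ∂(sphereUnif n) = 1 / n := by
  have hprob := sphereUnif_prob (n := n) hn
  have hsum : ∑ j : Fin n, ∫ y, ((y : E n) j) ^ 2 ∂(sphereUnif n) = 1 := by
    rw [← integral_finset_sum _ (fun j _ => integrable_cont (f := fun y : sphere (0 : E n) 1 => ((y : E n) j) ^ 2) ((continuous_coord j).pow 2))]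
    rw [integral_congr_ae (Filter.Eventually.of_forall sum_sq_coord)]
    simp
  have hconst : ∑ j : Fin n, ∫ y, ((y : E n) j) ^ 2 ∂(sphereUnif n)
      = n * ∫ y, ((y : E n) i) ^ 2 ∂(sphereUnif n) := by
    rw [Finset.sum_congr rfl fun j _ => integral_sq_eq j i]
    rw [Finset.sum_const, Finset.card_univ, Fintype.card_fin, nsmul_eq_mul]
  rw [hconst] at hsum
  field_simp
  linarith

end DemiAux

namespace DemiAux2
open Finset

variable {d : ℕ}

def cd (d : ℕ) : ℝ := 1 / Real.sqrt d

lemma cd_pos (hd : 0 < d) : 0 < cd d := by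
  have : (0 : ℝ) < Real.sqrt d := Real.sqrt_pos.2 (by exact_mod_cast hd)
  exact div_pos one_pos this

lemma cd_sq (hd : 0 < d) : cd d ^ 2 = 1 / d := by
  rw [cd, div_pow, one_pow, Real.sq_sqrt (by positivity)]

def dmap (d : ℕ) (ε : Fin d → Bool) : E d :=
  (WithLp.toLp 2 (fun i => if ε i then -(1 / Real.sqrt d) else 1 / Real.sqrt d) : E d)

lemma dmap_apply (ε : Fin d → Bool) (i : Fin d) :
    dmap d ε i = if ε i then -(cd d) else cd d := rfl

lemma dmap_injective (hd : 0 < d) : Function.Injective (dmap d) := by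
  intro ε ε' h
  funext i
  have := congrArg (fun x : E d => x i) h
  have hc := cd_pos hd
  have hs : (0:ℝ) < (Real.sqrt d)⁻¹ :=
    inv_pos.2 (Real.sqrt_pos.2 (by exact_mod_cast hd))
  by_contra hne
  rcases Bool.eq_false_or_eq_true (ε i) with h1 | h1 <;>
    rcases Bool.eq_false_or_eq_true (ε' i) with h2 | h2 <;>
      simp [dmap_apply, h1, h2, cd] at this hne <;> linarith [this, hs]

def flip2 (ε : Fin d → Bool) (i k : Fin d) : Fin d → Bool :=
  Function.update (Function.update ε i (!ε i)) k (!ε k)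

lemma flip2_at_k (ε : Fin d → Bool) (i k : Fin d) : flip2 ε i k k = !ε k := by
  simp [flip2]

lemma flip2_at_i (ε : Fin d → Bool) {i k : Fin d} (h : i ≠ k) : flip2 ε i k i = !ε i := by
  simp [flip2, Function.update_apply, h]

lemma flip2_at_other (ε : Fin d → Bool) {i k j : Fin d} (hji : j ≠ i) (hjk : j ≠ k) :
    flip2 ε i k j = ε j := by
  simp [flip2, Function.update_apply, hji, hjk]

lemma flip2_flip2 (ε : Fin d → Bool) {i k : Fin d} (h : i ≠ k) :
    flip2 (flip2 ε i k) i k = ε := by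
  funext j
  rcases eq_or_ne j i with rfl | hji
  · rw [flip2_at_i _ h, flip2_at_i _ h, Bool.not_not]
  · rcases eq_or_ne j k with rfl | hjk
    · rw [flip2_at_k, flip2_at_k, Bool.not_not]
    · rw [flip2_at_other _ hji hjk, flip2_at_other _ hji hjk]

lemma fun_update_apply {β : Type*} (η : Fin d → Bool) (k : Fin d) (b : Bool)
    (w : Fin d → Bool → β) :
    (fun j => w j ((Function.update η k b) j)) = Function.update (fun j => w j (η j)) k (w k b) := by
  funext j
  rcases eq_or_ne j k with rfl | h
  · simp
  · simp [Function.update_apply, h]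

/-- Parity of the number of `true`s is preserved by flipping two coordinates. -/
lemma flip2_parity (ε : Fin d → Bool) {i k : Fin d} (h : i ≠ k)
    (he : Even (Finset.univ.filter fun j => ε j = true).card) :
    Even (Finset.univ.filter fun j => flip2 ε i k j = true).card := by
  rw [← ZMod.natCast_eq_zero_iff_even] at he ⊢
  have key : ∀ η : Fin d → Bool,
      (((Finset.univ.filter fun j => η j = true).card : ℕ) : ZMod 2)
        = ∑ j, (fun j => if η j = true then (1 : ZMod 2) else 0) j := by
    intro η
    rw [Finset.card_filter, Nat.cast_sum]
    exact Finset.sum_congr rfl fun j _ => by by_cases hb : η j = true <;> simp [hb]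
  rw [key] at he ⊢
  have hG : ∀ b : Bool, (if (!b) = true then (1 : ZMod 2) else 0)
      = 1 + (if b = true then (1 : ZMod 2) else 0) := by
    intro b; cases b <;> simp <;> rfl
  have hik : i ∈ Finset.univ \ ({k} : Finset (Fin d)) := by
    simp [h]
  calc ∑ j, (fun j => if flip2 ε i k j = true then (1 : ZMod 2) else 0) j
      = ∑ j, Function.update
          (fun j => if (Function.update ε i (!ε i)) j = true then (1 : ZMod 2) else 0)
          k (if (!ε k) = true then (1 : ZMod 2) else 0) j := by
        rw [← fun_update_apply (Function.update ε i (!ε i)) k (!ε k)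
          (fun j b => if b = true then (1 : ZMod 2) else 0)]
        rfl
    _ = (if (!ε k) = true then (1 : ZMod 2) else 0)
        + ∑ j ∈ Finset.univ \ {k},
            (fun j => if (Function.update ε i (!ε i)) j = true then (1 : ZMod 2) else 0) j :=
        Finset.sum_update_of_mem (Finset.mem_univ k) _ _
    _ = (if (!ε k) = true then (1 : ZMod 2) else 0)
        + ∑ j ∈ Finset.univ \ {k},
            Function.update (fun j => if ε j = true then (1 : ZMod 2) else 0)
              i (if (!ε i) = true then (1 : ZMod 2) else 0) j := by
        rw [← fun_update_apply ε i (!ε i) (fun j b => if b = true then (1 : ZMod 2) else 0)]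
    _ = (if (!ε k) = true then (1 : ZMod 2) else 0)
        + ((if (!ε i) = true then (1 : ZMod 2) else 0)
          + ∑ j ∈ (Finset.univ \ {k}) \ {i},
              (fun j => if ε j = true then (1 : ZMod 2) else 0) j) := by
        rw [Finset.sum_update_of_mem hik]
    _ = ∑ j, (fun j => if ε j = true then (1 : ZMod 2) else 0) j := by
        rw [hG, hG]
        have e1 : ∑ j, (fun j => if ε j = true then (1 : ZMod 2) else 0) j
            = ∑ j ∈ Finset.univ \ {k},
                (fun j => if ε j = true then (1 : ZMod 2) else 0) j
              + (if ε k = true then (1 : ZMod 2) else 0) :=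
          Finset.sum_eq_sum_sdiff_singleton_add (Finset.mem_univ k) _
        have e2 : ∑ j ∈ Finset.univ \ {k},
              (fun j => if ε j = true then (1 : ZMod 2) else 0) j
            = ∑ j ∈ (Finset.univ \ {k}) \ {i},
                (fun j => if ε j = true then (1 : ZMod 2) else 0) j
              + (if ε i = true then (1 : ZMod 2) else 0) :=
          Finset.sum_eq_sum_sdiff_singleton_add hik _
        rw [e1, e2]
        have h2 : (1 : ZMod 2) + 1 = 0 := rfl
        ring_nf
        linear_combination (if ε i = true then (1 : ZMod 2) else 0) * 0 + h2
  exact he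

end DemiAux2


namespace DemiAux2
open Finset MeasureTheory Metric

variable {d : ℕ}

/-- The even-weight sign vectors. -/
def evens (d : ℕ) : Finset (Fin d → Bool) :=
  Finset.univ.filter fun ε => Even (Finset.univ.filter fun i => ε i = true).card

lemma sum_sign_zero (v : Fin d →₀ ℕ) {i k : Fin d} (hik : i ≠ k) (hvi : Odd (v i))
    (hvk : Even (v k)) :
    ∑ ε ∈ evens d, (∏ j, if ε j = true then ((-1:ℝ) ^ (v j)) else 1) = 0 := by
  classical
  refine Finset.sum_involution (fun ε _ => flip2 ε i k) ?_ ?_ ?_ ?_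
  · intro ε hε
    have hik' : i ∈ Finset.univ \ ({k} : Finset (Fin d)) := by simp [hik]
    have hwk : ∀ b : Bool, (if b = true then ((-1:ℝ) ^ (v k)) else 1) = 1 := by
      intro b; rw [hvk.neg_one_pow, ite_self]
    have hwi : (if (!ε i) = true then ((-1:ℝ) ^ (v i)) else 1)
        = -(if ε i = true then ((-1:ℝ) ^ (v i)) else 1) := by
      rw [hvi.neg_one_pow]; cases ε i <;> simp
    have hflip : (∏ j, if flip2 ε i k j = true then ((-1:ℝ) ^ (v j)) else 1)
        = -(∏ j, if ε j = true then ((-1:ℝ) ^ (v j)) else 1) := by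
      calc (∏ j, if flip2 ε i k j = true then ((-1:ℝ) ^ (v j)) else 1)
          = ∏ j, Function.update
              (fun j => if (Function.update ε i (!ε i)) j = true then ((-1:ℝ) ^ (v j)) else 1)
              k (if (!ε k) = true then ((-1:ℝ) ^ (v k)) else 1) j := by
            rw [← fun_update_apply (Function.update ε i (!ε i)) k (!ε k)
              (fun j b => if b = true then ((-1:ℝ) ^ (v j)) else 1)]
            rfl
        _ = (if (!ε k) = true then ((-1:ℝ) ^ (v k)) else 1)
            * ∏ j ∈ Finset.univ \ {k},
                (fun j => if (Function.update ε i (!ε i)) j = true then ((-1:ℝ) ^ (v j)) else 1) j :=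
            Finset.prod_update_of_mem (Finset.mem_univ k) _ _
        _ = (if (!ε k) = true then ((-1:ℝ) ^ (v k)) else 1)
            * ∏ j ∈ Finset.univ \ {k},
                Function.update (fun j => if ε j = true then ((-1:ℝ) ^ (v j)) else 1)
                  i (if (!ε i) = true then ((-1:ℝ) ^ (v i)) else 1) j := by
            rw [← fun_update_apply ε i (!ε i)
              (fun j b => if b = true then ((-1:ℝ) ^ (v j)) else 1)]
        _ = (if (!ε k) = true then ((-1:ℝ) ^ (v k)) else 1)
            * ((if (!ε i) = true then ((-1:ℝ) ^ (v i)) else 1)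
              * ∏ j ∈ (Finset.univ \ {k}) \ {i},
                  (fun j => if ε j = true then ((-1:ℝ) ^ (v j)) else 1) j) := by
            rw [Finset.prod_update_of_mem hik']
        _ = -(∏ j, if ε j = true then ((-1:ℝ) ^ (v j)) else 1) := by
            have e1 : (∏ j, if ε j = true then ((-1:ℝ) ^ (v j)) else 1)
                = (∏ j ∈ Finset.univ \ {k},
                    (fun j => if ε j = true then ((-1:ℝ) ^ (v j)) else 1) j)
                  * (if ε k = true then ((-1:ℝ) ^ (v k)) else 1) :=
              Finset.prod_eq_prod_sdiff_singleton_mul (Finset.mem_univ k) _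
            have e2 : (∏ j ∈ Finset.univ \ {k},
                  (fun j => if ε j = true then ((-1:ℝ) ^ (v j)) else 1) j)
                = (∏ j ∈ (Finset.univ \ {k}) \ {i},
                    (fun j => if ε j = true then ((-1:ℝ) ^ (v j)) else 1) j)
                  * (if ε i = true then ((-1:ℝ) ^ (v i)) else 1) :=
              Finset.prod_eq_prod_sdiff_singleton_mul hik' _
            rw [e1, e2, hwk, hwk, hwi]
            ring
    rw [hflip]
    ring
  · intro ε hε _
    intro heq
    have h2 : flip2 ε i k = ε := heq
    have h3 := congrFun h2 i
    rw [flip2_at_i _ hik] at h3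
    exact Bool.not_ne_self (ε i) h3
  · intro ε hε
    simp only [evens, Finset.mem_filter] at hε ⊢
    exact ⟨Finset.mem_univ _, flip2_parity ε hik hε.2⟩
  · intro ε _
    exact flip2_flip2 ε hik

lemma demicube_sum (hd : 0 < d) (f : E d → ℝ) :
    ∑ x ∈ demicube d, f x = ∑ ε ∈ evens d, f (dmap d ε) := by
  letI : DecidableEq (E d) := Classical.decEq _
  unfold demicube
  exact Finset.sum_image (fun x _ y _ h => dmap_injective hd h)

lemma demicube_card (hd : 0 < d) : (demicube d).card = (evens d).card := by
  letI : DecidableEq (E d) := Classical.decEq _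
  unfold demicube
  exact Finset.card_image_of_injective _ (dmap_injective hd)

lemma demicube_nonempty : (demicube d).Nonempty := by
  classical
  letI : DecidableEq (E d) := Classical.decEq _
  refine ⟨dmap d (fun _ => false), ?_⟩
  unfold demicube
  exact Finset.mem_image.2 ⟨fun _ => false,
    Finset.mem_filter.2 ⟨Finset.mem_univ _, by simp⟩, rfl⟩

lemma demicube_card_pos : 0 < (demicube d).card := Finset.card_pos.2 demicube_nonempty

lemma mem_demicube {x : E d} (hx : x ∈ demicube d) : ∃ ε : Fin d → Bool, dmap d ε = x := by
  classical
  letI : DecidableEq (E d) := Classical.decEq _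
  unfold demicube at hx
  obtain ⟨ε, -, hε⟩ := Finset.mem_image.1 hx
  exact ⟨ε, hε⟩

lemma demicube_subset_sphere (hd : 0 < d) :
    (↑(demicube d) : Set (E d)) ⊆ sphere (0 : E d) 1 := by
  intro x hx
  obtain ⟨ε, rfl⟩ := mem_demicube (Finset.mem_coe.1 hx)
  rw [mem_sphere_zero_iff_norm, EuclideanSpace.norm_eq]
  have h1 : ∀ i, ‖dmap d ε i‖ ^ 2 = cd d ^ 2 := by
    intro i
    rw [Real.norm_eq_abs, sq_abs, dmap_apply]
    cases ε i <;> simp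
  rw [Finset.sum_congr rfl fun i _ => h1 i, Finset.sum_const, Finset.card_univ,
    Fintype.card_fin, nsmul_eq_mul, cd_sq hd]
  have hdne : (d : ℝ) ≠ 0 := by exact_mod_cast hd.ne'
  rw [mul_one_div, div_self hdne, Real.sqrt_one]

/-- The key per-monomial identity. -/
lemma monomial_avg (hd : 4 ≤ d) (v : Fin d →₀ ℕ) (hv : ∑ j, v j ≤ 3) :
    (∑ x ∈ demicube d, ∏ i, x i ^ v i) / ((demicube d).card : ℝ)
      = ∫ y, ∏ i, ((y : E d) i) ^ v i ∂(sphereUnif d) := by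
  classical
  have hd0 : 0 < d := by omega
  have hprob := DemiAux.sphereUnif_prob (n := d) hd0
  have hterm : ∀ ε : Fin d → Bool, (∏ i, (dmap d ε i) ^ v i)
      = (∏ j, if ε j = true then ((-1:ℝ) ^ (v j)) else 1) * (cd d) ^ (∑ j, v j) := by
    intro ε
    rw [← Finset.prod_pow_eq_pow_sum, ← Finset.prod_mul_distrib]
    refine Finset.prod_congr rfl fun j _ => ?_
    have hsplit : dmap d ε j = (if ε j = true then (-1:ℝ) else 1) * cd d := by
      rw [dmap_apply]; cases ε j <;> simp
    rw [hsplit, mul_pow]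
    congr 1
    cases ε j <;> simp
  rw [demicube_sum hd0, Finset.sum_congr rfl fun ε _ => hterm ε]
  by_cases hodd : ∃ i, Odd (v i)
  · obtain ⟨i, hi⟩ := hodd
    -- find a coordinate with even exponent
    set S : Finset (Fin d) := Finset.univ.filter fun j => Odd (v j) with hS
    have hcard : S.card ≤ ∑ j, v j := by
      calc S.card = ∑ j ∈ S, 1 := by rw [Finset.sum_const, smul_eq_mul, mul_one]
        _ ≤ ∑ j ∈ S, v j := Finset.sum_le_sum fun j hj => by
            obtain ⟨m, hm⟩ := (Finset.mem_filter.1 hj).2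
            omega
        _ ≤ ∑ j, v j := Finset.sum_le_sum_of_subset (Finset.subset_univ S)
    have hSne : S ≠ Finset.univ := by
      intro hcontra
      have h4 : d ≤ ∑ j, v j := by
        calc d = (Finset.univ : Finset (Fin d)).card := by simp
          _ = S.card := by rw [hcontra]
          _ ≤ ∑ j, v j := hcard
      omega
    obtain ⟨k, -, hk⟩ := Finset.exists_of_ssubset (Finset.ssubset_univ_iff.2 hSne)
    have hvk : Even (v k) := by
      rw [← Nat.not_odd_iff_even]
      intro hcontra
      exact hk (Finset.mem_filter.2 ⟨Finset.mem_univ _, hcontra⟩)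
    have hik : i ≠ k := by
      intro hcontra
      exact hk (hcontra ▸ Finset.mem_filter.2 ⟨Finset.mem_univ _, hi⟩)
    rw [← Finset.sum_mul, sum_sign_zero v hik hi hvk, zero_mul, zero_div,
      DemiAux.integral_monomial_odd v i hi]
  · push_neg at hodd
    have heven : ∀ j, Even (v j) := fun j => Nat.not_odd_iff_even.1 (hodd j)
    have hsign : ∀ ε : Fin d → Bool,
        (∏ j, if ε j = true then ((-1:ℝ) ^ (v j)) else 1) = 1 := by
      intro ε
      refine Finset.prod_eq_one fun j _ => ?_
      rw [(heven j).neg_one_pow, ite_self]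
    rw [Finset.sum_congr rfl fun ε _ => by rw [hsign, one_mul]]
    rw [Finset.sum_const, nsmul_eq_mul, demicube_card hd0]
    have hcardne : ((evens d).card : ℝ) ≠ 0 := by
      have : 0 < (evens d).card := by
        rw [← demicube_card hd0]; exact demicube_card_pos
      exact_mod_cast this.ne'
    rw [mul_comm, mul_div_assoc, div_self hcardne, mul_one]
    -- classify the exponent vector
    have hM : Even (∑ j, v j) := Finset.even_sum _ fun j _ => heven j
    obtain ⟨r, hr⟩ := hM
    have : (∑ j, v j) = 0 ∨ (∑ j, v j) = 2 := by omega
    rcases this with hM0 | hM2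
    · rw [hM0, pow_zero]
      have hz : ∀ j, v j = 0 := fun j =>
        Finset.sum_eq_zero_iff.1 hM0 j (Finset.mem_univ j)
      have : (fun y : sphere (0 : E d) 1 => ∏ i, ((y : E d) i) ^ v i) = fun _ => (1:ℝ) := by
        funext y
        exact Finset.prod_eq_one fun j _ => by rw [hz j, pow_zero]
      rw [this, integral_const, probReal_univ, one_smul]
    · -- sum is 2, all even: single coordinate with exponent 2
      have hex : ∃ i, v i ≠ 0 := by
        by_contra hcon
        push_neg at hcon
        have : (∑ j, v j) = 0 := Finset.sum_eq_zero fun j _ => hcon j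
        omega
      obtain ⟨i, hi0⟩ := hex
      have hle : v i ≤ 2 := by
        rw [← hM2]
        exact Finset.single_le_sum (fun j _ => Nat.zero_le _) (Finset.mem_univ i)
      have hvi2 : v i = 2 := by
        obtain ⟨m, hm⟩ := heven i
        omega
      have hrest : ∀ j, j ≠ i → v j = 0 := by
        intro j hj
        have hsplit := Finset.add_sum_erase Finset.univ (⇑v) (Finset.mem_univ i)
        have hzero : ∑ x ∈ Finset.univ.erase i, v x = 0 := by omega
        exact Finset.sum_eq_zero_iff.1 hzero j (Finset.mem_erase.2 ⟨hj, Finset.mem_univ j⟩)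
      have hprod : (fun y : sphere (0 : E d) 1 => ∏ j, ((y : E d) j) ^ v j)
          = fun y : sphere (0 : E d) 1 => ((y : E d) i) ^ 2 := by
        funext y
        rw [Finset.prod_eq_single i (fun j _ hj => by rw [hrest j hj, pow_zero])
          (fun h => absurd (Finset.mem_univ i) h), hvi2]
      rw [hprod, DemiAux.integral_sq hd0 i, hM2, cd_sq hd0]

end DemiAux2


open DemiAux DemiAux2

/-- Lemma 3.3: the `d`-demicube, `d ≥ 4`, is a `2`-stiff configuration on `S^{d-1}`. -/
theorem demicube_isStiff_two (d : ℕ) (hd : 4 ≤ d) : IsStiff d 2 (demicube d) := by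
  classical
  have hd0 : 0 < d := by omega
  constructor
  · -- spherical design
    refine ⟨demicube_subset_sphere hd0, fun p hp => ?_⟩
    have hp3 : p.totalDegree ≤ 3 := by norm_num at hp; exact hp
    have havg : ∀ v ∈ p.support,
        (∑ x ∈ demicube d, ∏ i, x i ^ v i) / ((demicube d).card : ℝ)
          = ∫ y, ∏ i, ((y : E d) i) ^ v i ∂(sphereUnif d) := by
      intro v hv
      refine monomial_avg hd v ?_
      have h1 := MvPolynomial.le_totalDegree hv
      have h2 : (v.sum fun _ e => e) = ∑ j, v j :=
        Finsupp.sum_fintype v (fun _ e => e) (fun _ => rfl)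
      omega
    have hint : ∀ v ∈ p.support, Integrable
        (fun y : sphere (0 : E d) 1 =>
          MvPolynomial.coeff v p * ∏ i, ((y : E d) i) ^ v i) (sphereUnif d) :=
      fun v _ => (integrable_cont (continuous_monomial v)).const_mul _
    calc (∑ x ∈ demicube d, MvPolynomial.eval (fun i => x i) p) / ((demicube d).card : ℝ)
        = ∑ v ∈ p.support,
            MvPolynomial.coeff v p *
              ((∑ x ∈ demicube d, ∏ i, x i ^ v i) / ((demicube d).card : ℝ)) := by
          simp only [MvPolynomial.eval_eq']
          rw [Finset.sum_comm, Finset.sum_div]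
          refine Finset.sum_congr rfl fun v _ => ?_
          rw [← Finset.mul_sum, mul_div_assoc]
      _ = ∑ v ∈ p.support,
            MvPolynomial.coeff v p * ∫ y, ∏ i, ((y : E d) i) ^ v i ∂(sphereUnif d) :=
          Finset.sum_congr rfl fun v hv => by rw [havg v hv]
      _ = ∫ y, MvPolynomial.eval (fun i => (y : E d) i) p ∂(sphereUnif d) := by
          rw [Finset.sum_congr rfl fun v _ => (integral_const_mul
            (MvPolynomial.coeff v p) _).symm, ← integral_finset_sum _ hint]
          refine integral_congr_ae (Filter.Eventually.of_forall fun y => ?_)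
          simp only [MvPolynomial.eval_eq']
  · -- Dm nonempty
    refine ⟨EuclideanSpace.single ⟨0, hd0⟩ (1:ℝ), ?_,
      ({cd d, -(cd d)} : Finset ℝ), ?_, ?_⟩
    · rw [mem_sphere_zero_iff_norm, EuclideanSpace.norm_single, norm_one]
    · exact (Finset.card_insert_le _ _).trans (by simp)
    · intro x hx
      obtain ⟨ε, rfl⟩ := mem_demicube (Finset.mem_coe.1 hx)
      have : ⟪EuclideanSpace.single ⟨0, hd0⟩ (1:ℝ), dmap d ε⟫ = dmap d ε ⟨0, hd0⟩ := by
        rw [EuclideanSpace.inner_single_left]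
        simp
      rw [this, dmap_apply]
      cases ε ⟨0, hd0⟩ <;> simp
end
end

section
/- For every d ≥ 5, the set of points x ∈ S^{d-1} forming at most 2 distinct dot products with the points of the d-demicube ω̄^d is exactly the cross-polytope ω*_{2d} = {±e_1, ..., ±e_d}; that is, D_2(ω̄^d) = ω*_{2d}. -/
open MeasureTheory Metric
open scoped RealInnerProductSpace

noncomputable section

/-- The vertex set `{±e_1, …, ±e_d}` of the regular cross-polytope inscribed in `S^{d-1}`. -/
def crossPolytope (d : ℕ) : Set (E d) :=
  {x | ∃ i : Fin d, x = EuclideanSpace.single i (1 : ℝ) ∨ x = -EuclideanSpace.single i (1 : ℝ)}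

/-! ### Auxiliary lemmas -/

lemma dod_mem_demicube (d : ℕ) (S : Finset (Fin d)) (hS : Even S.card) :
    (WithLp.toLp 2 (fun i => if i ∈ S then -(1 / Real.sqrt d) else 1 / Real.sqrt d) : E d) ∈ demicube d := by
  rw [demicube]
  refine (@Finset.mem_image _ _ (Classical.decEq (E d)) _ _ _).mpr
    ⟨fun i => decide (i ∈ S), ?_, ?_⟩
  · simp only [Finset.mem_filter, Finset.mem_univ, true_and, decide_eq_true_eq]
    convert hS using 2
    ext x; simp
  · ext i; by_cases h : i ∈ S <;> simp [h]

lemma dod_inner_pt (d : ℕ) (z : E d) (S : Finset (Fin d)) :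
    ⟪z, (WithLp.toLp 2 (fun i => if i ∈ S then -(1 / Real.sqrt d) else 1 / Real.sqrt d) : E d)⟫
      = ((∑ i, z i) - 2 * ∑ i ∈ S, z i) / Real.sqrt d := by
  simp only [PiLp.inner_apply, RCLike.inner_apply, conj_trivial]
  have : ∀ i : Fin d, z i * (if i ∈ S then -(1 / Real.sqrt d) else 1 / Real.sqrt d)
      = z i / Real.sqrt d - (if i ∈ S then 2 * z i / Real.sqrt d else 0) := by
    intro i; by_cases h : i ∈ S <;> simp [h] <;> ring
  rw [Finset.sum_congr rfl fun i _ => (mul_comm _ _).trans (this i), Finset.sum_sub_distrib,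
    Finset.sum_ite_mem, Finset.univ_inter, ← Finset.sum_div, ← Finset.sum_div,
    ← Finset.mul_sum, ← sub_div]

lemma dod_P (d : ℕ) (hd : 5 ≤ d) (z : E d) (T : Finset ℝ) (hT : T.card ≤ 2)
    (hmem : ∀ S : Finset (Fin d), Even S.card →
      ((∑ i, z i) - 2 * ∑ i ∈ S, z i) / Real.sqrt d ∈ T)
    (S1 S2 : Finset (Fin d)) (h1 : Even S1.card) (h2 : Even S2.card) :
    (∑ i ∈ S1, z i) = 0 ∨ (∑ i ∈ S2, z i) = 0 ∨ (∑ i ∈ S1, z i) = (∑ i ∈ S2, z i) := by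
  by_contra hc
  push_neg at hc
  obtain ⟨e1, e2, e12⟩ := hc
  have hdpos : (0:ℝ) < d := by
    have : (5:ℝ) ≤ d := by exact_mod_cast hd
    linarith
  have hs : (Real.sqrt d) ≠ 0 := ne_of_gt (Real.sqrt_pos.mpr hdpos)
  set A := ∑ i, z i with hA
  have hinj : ∀ u v : ℝ, (A - 2*u)/Real.sqrt d = (A - 2*v)/Real.sqrt d → u = v := by
    intro u v h
    field_simp at h
    linarith
  have m0 : (A - 2 * ∑ i ∈ (∅ : Finset (Fin d)), z i) / Real.sqrt d ∈ T := hmem ∅ (by simp)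
  simp only [Finset.sum_empty, mul_zero, sub_zero] at m0
  have m1 := hmem S1 h1
  have m2 := hmem S2 h2
  have hsub : ({A / Real.sqrt d, (A - 2 * ∑ i ∈ S1, z i)/Real.sqrt d,
      (A - 2 * ∑ i ∈ S2, z i)/Real.sqrt d} : Finset ℝ) ⊆ T := by
    intro x hx
    simp only [Finset.mem_insert, Finset.mem_singleton] at hx
    rcases hx with rfl | rfl | rfl <;> assumption
  have hcard : ({A / Real.sqrt d, (A - 2 * ∑ i ∈ S1, z i)/Real.sqrt d,
      (A - 2 * ∑ i ∈ S2, z i)/Real.sqrt d} : Finset ℝ).card = 3 := by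
    rw [Finset.card_insert_of_notMem, Finset.card_insert_of_notMem, Finset.card_singleton]
    · simp only [Finset.mem_singleton]
      intro h; exact e12 (hinj _ _ h)
    · simp only [Finset.mem_insert, Finset.mem_singleton]
      push_neg
      constructor
      · intro h
        have : (A - 2*(0:ℝ))/Real.sqrt d = (A - 2 * ∑ i ∈ S1, z i)/Real.sqrt d := by
          rw [mul_zero, sub_zero]; exact h
        exact e1 (hinj _ _ this).symm
      · intro h
        have : (A - 2*(0:ℝ))/Real.sqrt d = (A - 2 * ∑ i ∈ S2, z i)/Real.sqrt d := by
          rw [mul_zero, sub_zero]; exact h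
        exact e2 (hinj _ _ this).symm
  have := Finset.card_le_card hsub
  omega

lemma dod_F3 (d : ℕ) (z : E d)
    (hP : ∀ S1 S2 : Finset (Fin d), Even S1.card → Even S2.card →
      (∑ i ∈ S1, z i) = 0 ∨ (∑ i ∈ S2, z i) = 0 ∨ (∑ i ∈ S1, z i) = (∑ i ∈ S2, z i))
    (a b c e : Fin d) (hab : a ≠ b) (hac : a ≠ c) (hae : a ≠ e)
    (hbc : b ≠ c) (hbe : b ≠ e) (hce : c ≠ e) :
    z a + z b = 0 ∨ z c + z e = 0 := by
  by_contra hcon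
  push_neg at hcon
  obtain ⟨h1, h2⟩ := hcon
  have sab : ∑ i ∈ ({a, b} : Finset (Fin d)), z i = z a + z b := Finset.sum_pair hab
  have sce : ∑ i ∈ ({c, e} : Finset (Fin d)), z i = z c + z e := Finset.sum_pair hce
  have cab : ({a, b} : Finset (Fin d)).card = 2 := Finset.card_pair hab
  have cce : ({c, e} : Finset (Fin d)).card = 2 := Finset.card_pair hce
  have hna : a ∉ ({b, c, e} : Finset (Fin d)) := by simp [hab, hac, hae]
  have hnb : b ∉ ({c, e} : Finset (Fin d)) := by simp [hbc, hbe]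
  have squad : ∑ i ∈ ({a, b, c, e} : Finset (Fin d)), z i = z a + z b + (z c + z e) := by
    rw [show ({a,b,c,e} : Finset (Fin d)) = insert a (insert b ({c,e})) from rfl,
      Finset.sum_insert hna, Finset.sum_insert hnb, Finset.sum_pair hce]
    ring
  have cquad : ({a, b, c, e} : Finset (Fin d)).card = 4 := by
    rw [show ({a,b,c,e} : Finset (Fin d)) = insert a (insert b ({c,e})) from rfl,
      Finset.card_insert_of_notMem hna, Finset.card_insert_of_notMem hnb,
      Finset.card_pair hce]
  have heq : z a + z b = z c + z e := by
    rcases hP {a,b} {c,e} (by rw [cab]; decide) (by rw [cce]; decide) with h | h | h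
    · rw [sab] at h; exact absurd h h1
    · rw [sce] at h; exact absurd h h2
    · rw [sab, sce] at h; exact h
  rcases hP {a,b} {a,b,c,e} (by rw [cab]; decide) (by rw [cquad]; decide) with h | h | h
  · rw [sab] at h; exact h1 h
  · rw [squad] at h; exact h1 (by linarith)
  · rw [sab, squad] at h; exact h1 (by linarith)

lemma dod_caseB (d : ℕ) (z : E d)
    (hF3 : ∀ a b c e : Fin d, a ≠ b → a ≠ c → a ≠ e → b ≠ c → b ≠ e → c ≠ e →
      (z a + z b = 0 ∨ z c + z e = 0))
    (i j k l m : Fin d) (hij : i ≠ j) (hik : i ≠ k) (hil : i ≠ l) (him : i ≠ m)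
    (hjk : j ≠ k) (hjl : j ≠ l) (hjm : j ≠ m) (hkl : k ≠ l) (hkm : k ≠ m) (hlm : l ≠ m)
    (hzi : z i ≠ 0) (hsum : z i + z j = 0) (hik0 : z i + z k ≠ 0) : False := by
  have hjl0 : z j + z l = 0 := (hF3 i k j l hik hij hil hjk.symm hkl hjl).resolve_left hik0
  have hjm0 : z j + z m = 0 := (hF3 i k j m hik hij him hjk.symm hkm hjm).resolve_left hik0
  have hil0 : z i + z l ≠ 0 := by intro h; apply hzi; linarith
  have hjk0 : z j + z k = 0 := (hF3 i l j k hil hij hik hjl.symm hkl.symm hjk).resolve_left hil0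
  rcases hF3 k l i m hkl hik.symm hkm hil.symm hlm him with h | h
  · exact hzi (by linarith)
  · exact hzi (by linarith)

lemma dod_pair (d : ℕ) (hd : 5 ≤ d) (z : E d)
    (hF3 : ∀ a b c e : Fin d, a ≠ b → a ≠ c → a ≠ e → b ≠ c → b ≠ e → c ≠ e →
      (z a + z b = 0 ∨ z c + z e = 0))
    (i j : Fin d) (hij : i ≠ j) : z i = 0 ∨ z j = 0 := by
  by_contra hc
  push_neg at hc
  obtain ⟨hzi, hzj⟩ := hc
  have hcard : 3 ≤ (Finset.univ \ {i, j} : Finset (Fin d)).card := by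
    rw [Finset.card_sdiff_of_subset (Finset.subset_univ _), Finset.card_univ, Fintype.card_fin,
      Finset.card_pair hij]
    omega
  obtain ⟨t, hts, htc⟩ := Finset.exists_subset_card_eq hcard
  obtain ⟨k, l, m, hkl, hkm, hlm, rfl⟩ := Finset.card_eq_three.mp htc
  have hk := hts (show k ∈ ({k,l,m} : Finset (Fin d)) by simp)
  have hl := hts (show l ∈ ({k,l,m} : Finset (Fin d)) by simp)
  have hm := hts (show m ∈ ({k,l,m} : Finset (Fin d)) by simp)
  simp only [Finset.mem_sdiff, Finset.mem_univ, true_and, Finset.mem_insert,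
    Finset.mem_singleton, not_or] at hk hl hm
  have hik : i ≠ k := fun h => hk.1 h.symm
  have hjk : j ≠ k := fun h => hk.2 h.symm
  have hil : i ≠ l := fun h => hl.1 h.symm
  have hjl : j ≠ l := fun h => hl.2 h.symm
  have him : i ≠ m := fun h => hm.1 h.symm
  have hjm : j ≠ m := fun h => hm.2 h.symm
  by_cases hs : z i + z j = 0
  · by_cases hik0 : z i + z k = 0
    · have hjk0 : z j + z k ≠ 0 := by intro h; apply hzi; linarith
      exact dod_caseB d z hF3 j i k l m hij.symm hjk hjl hjm hik hil him hkl hkm hlm hzj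
        (by linarith) hjk0
    · exact dod_caseB d z hF3 i j k l m hij hik hil him hjk hjl hjm hkl hkm hlm hzi hs hik0
  · have hkl0 : z k + z l = 0 := (hF3 i j k l hij hik hil hjk hjl hkl).resolve_left hs
    have hkm0 : z k + z m = 0 := (hF3 i j k m hij hik him hjk hjm hkm).resolve_left hs
    have hlm0 : z l + z m = 0 := (hF3 i j l m hij hil him hjl hjm hlm).resolve_left hs
    rcases hF3 i k j l hik hij hil hjk.symm hkl hjl with h | h
    · exact hzi (by linarith)
    · exact hzj (by linarith)

/-- Lemma 3.4: for `d ≥ 5`, the set of points of `S^{d-1}` forming at most two distinct dot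
products with the `d`-demicube is exactly the cross-polytope `{±e_1, …, ±e_d}`. -/
theorem dual_of_demicube (d : ℕ) (hd : 5 ≤ d) :
    Dm d 2 ↑(demicube d) = crossPolytope d := by
  ext z
  constructor
  · rintro ⟨hzs, T, hT, hmem⟩
    have hmem' : ∀ S : Finset (Fin d), Even S.card →
        ((∑ i, z i) - 2 * ∑ i ∈ S, z i) / Real.sqrt d ∈ T := by
      intro S hS
      have := hmem _ (Finset.mem_coe.mpr (dod_mem_demicube d S hS))
      rwa [dod_inner_pt] at this
    have hP := dod_P d hd z T hT hmem'
    have hF3 := dod_F3 d z hP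
    have hpair := dod_pair d hd z hF3
    have hnorm : ‖z‖ = 1 := mem_sphere_zero_iff_norm.mp hzs
    have hsum1 : ∑ j, z j ^ 2 = 1 := by
      have h1 := EuclideanSpace.norm_eq z
      rw [hnorm] at h1
      have h2 : ∑ j, ‖z j‖ ^ 2 = 1 := Real.sqrt_eq_one.mp h1.symm
      simpa [Real.norm_eq_abs, sq_abs] using h2
    have hex : ∃ i, z i ≠ 0 := by
      by_contra h
      push_neg at h
      simp [h] at hsum1
    obtain ⟨i, hzi⟩ := hex
    have hrest : ∀ j, j ≠ i → z j = 0 := fun j hj => (hpair j i hj).resolve_right hzi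
    have hone : z i ^ 2 = 1 := by
      have hsum2 : ∑ j, z j ^ 2 = z i ^ 2 :=
        Finset.sum_eq_single i (fun b _ hb => by rw [hrest b hb]; ring)
          (fun h => absurd (Finset.mem_univ i) h)
      rw [← hsum1, hsum2]
    have h2 : (z i - 1) * (z i + 1) = 0 := by nlinarith [hone]
    refine ⟨i, ?_⟩
    rcases mul_eq_zero.mp h2 with h | h
    · left
      ext j
      rw [EuclideanSpace.single_apply]
      by_cases hji : j = i
      · subst hji; simp; linarith
      · simp [hji, hrest j hji]
    · right
      ext j
      have : (-EuclideanSpace.single i (1:ℝ) : E d) j = -(EuclideanSpace.single i (1:ℝ) j) := rfl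
      rw [this, EuclideanSpace.single_apply]
      by_cases hji : j = i
      · subst hji; simp; linarith
      · simp [hji, hrest j hji]
  · rintro ⟨i, hx | hx⟩ <;> subst hx
    · refine ⟨?_, {1/Real.sqrt d, -(1/Real.sqrt d)}, ?_, ?_⟩
      · rw [mem_sphere_zero_iff_norm]
        simp [EuclideanSpace.norm_single]
      · exact (Finset.card_insert_le _ _).trans (by simp)
      · intro x hx'
        rw [Finset.mem_coe, demicube] at hx'
        obtain ⟨ε, hε, rfl⟩ := (@Finset.mem_image _ _ (Classical.decEq (E d)) _ _ _).mp hx'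
        rw [EuclideanSpace.inner_single_left]
        by_cases h : ε i <;> simp [h]
    · refine ⟨?_, {1/Real.sqrt d, -(1/Real.sqrt d)}, ?_, ?_⟩
      · rw [mem_sphere_zero_iff_norm, norm_neg]
        simp [EuclideanSpace.norm_single]
      · exact (Finset.card_insert_le _ _).trans (by simp)
      · intro x hx'
        rw [Finset.mem_coe, demicube] at hx'
        obtain ⟨ε, hε, rfl⟩ := (@Finset.mem_image _ _ (Classical.decEq (E d)) _ _ _).mp hx'
        rw [inner_neg_left, EuclideanSpace.inner_single_left]
        by_cases h : ε i <;> simp [h]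
end
end

section
/- Let ω_N ⊂ S^d, d ≥ 1, be a 1-stiff configuration and let L be the linear subspace of ℝ^{d+1} spanned by ω_N. Then D_1(ω_N) = L^⊥ ∩ S^d. If k := dim L ≤ d-1, then D_1(ω_N) is the unit sphere of the (d+1-k)-dimensional subspace L^⊥; if k = d, then D_1(ω_N) = {a, -a} for some a ∈ S^d, and this two point set is itself a 1-stiff configuration. -/
open MeasureTheory Metric
open scoped RealInnerProductSpace

noncomputable section

/-! ### Auxiliary lemmas -/

open scoped Pointwise

/-- Negation map on the unit sphere. -/
def negSph (n : ℕ) : sphere (0 : E n) 1 → sphere (0 : E n) 1 := fun y =>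
  ⟨-y.1, by rw [mem_sphere_zero_iff_norm, norm_neg, ← mem_sphere_zero_iff_norm]; exact y.2⟩

lemma continuous_negSph (n : ℕ) : Continuous (negSph n) :=
  Continuous.subtype_mk (continuous_neg.comp continuous_subtype_val) _

lemma negSph_invol (n : ℕ) (y : sphere (0 : E n) 1) : negSph n (negSph n y) = y := by
  simp [negSph]

lemma map_negSph_toSphere (n : ℕ) :
    ((volume : Measure (E n)).toSphere).map (negSph n) = (volume : Measure (E n)).toSphere := by
  ext s hs
  rw [Measure.map_apply (continuous_negSph n).measurable hs]
  have hms : MeasurableSet (negSph n ⁻¹' s) := (continuous_negSph n).measurable hs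
  rw [Measure.toSphere_apply' _ hms, Measure.toSphere_apply' _ hs]
  congr 1
  have hpre : (negSph n ⁻¹' s) = negSph n '' s := by
    ext y
    constructor
    · intro hy; exact ⟨negSph n y, hy, negSph_invol n y⟩
    · rintro ⟨w, hw, rfl⟩; rw [Set.mem_preimage, negSph_invol]; exact hw
  have himg : ((↑) '' (negSph n ⁻¹' s) : Set (E n)) = -((↑) '' s) := by
    rw [hpre, ← Set.image_neg_eq_neg, Set.image_image, Set.image_image]
    rfl
  rw [himg, Set.smul_neg, Measure.measure_neg]

lemma map_negSph_unif (n : ℕ) : (sphereUnif n).map (negSph n) = sphereUnif n := by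
  unfold sphereUnif
  rw [Measure.map_smul, map_negSph_toSphere]

lemma integral_comp_negSph (n : ℕ) (f : sphere (0 : E n) 1 → ℝ)
    (hf : AEStronglyMeasurable f (sphereUnif n)) :
    ∫ y, f (negSph n y) ∂(sphereUnif n) = ∫ y, f y ∂(sphereUnif n) := by
  rw [← integral_map (continuous_negSph n).measurable.aemeasurable
      (by rwa [map_negSph_unif]), map_negSph_unif]

lemma continuous_coord (n : ℕ) (i : Fin n) :
    Continuous fun y : sphere (0 : E n) 1 => (y : E n) i :=
  (continuous_apply i).comp ((PiLp.continuous_ofLp 2 _).comp continuous_subtype_val)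

lemma integral_coord_zero (n : ℕ) (i : Fin n) :
    ∫ y, ((y : E n) i) ∂(sphereUnif n) = 0 := by
  have h := integral_comp_negSph n (fun y => (y : E n) i)
    ((continuous_coord n i).aestronglyMeasurable)
  have h2 : ∀ y : sphere (0 : E n) 1, ((negSph n y : E n) i) = -((y : E n) i) := fun y => rfl
  simp only [h2] at h
  rw [integral_neg] at h
  linarith

lemma sphereUnif_prob (n : ℕ) (hn : n ≠ 0) : IsProbabilityMeasure (sphereUnif n) := by
  constructor
  have : Nontrivial (E n) :=
    Module.nontrivial_of_finrank_pos (R := ℝ) (by rw [finrank_euclideanSpace_fin]; omega)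
  rw [sphereUnif, Measure.smul_apply, smul_eq_mul]
  have huniv : (volume : Measure (E n)).toSphere Set.univ
      = (Module.finrank ℝ (E n)) * volume (ball (0 : E n) 1) :=
    Measure.toSphere_apply_univ _
  refine ENNReal.inv_mul_cancel ?_ ?_
  · rw [huniv]
    refine mul_ne_zero ?_ (measure_ball_pos _ _ one_pos).ne'
    simpa [finrank_euclideanSpace_fin] using hn
  · rw [huniv]
    exact ENNReal.mul_ne_top (ENNReal.natCast_ne_top _) measure_ball_lt_top.ne

lemma integrable_coord (n : ℕ) (hn : n ≠ 0) (i : Fin n) :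
    Integrable (fun y : sphere (0 : E n) 1 => (y : E n) i) (sphereUnif n) := by
  haveI := sphereUnif_prob n hn
  exact integrableOn_univ.mp
    ((continuous_coord n i).continuousOn.integrableOn_compact isCompact_univ)

lemma single_of_sum_eq_one {n : ℕ} {m : Fin n →₀ ℕ} (h : (m.sum fun _ e => e) = 1) :
    ∃ i, m = Finsupp.single i 1 := by
  have hm : m ≠ 0 := by
    rintro rfl; simp [Finsupp.sum_zero_index] at h
  obtain ⟨i, hi⟩ := Finsupp.support_nonempty_iff.mpr hm
  have hsum : (m.sum fun _ e => e) = ∑ j ∈ m.support, m j := rfl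
  have hmi : 1 ≤ m i := Nat.one_le_iff_ne_zero.mpr (Finsupp.mem_support_iff.mp hi)
  have hle : m i ≤ 1 := by
    rw [hsum] at h
    calc m i ≤ ∑ j ∈ m.support, m j := Finset.single_le_sum (fun j _ => Nat.zero_le _) hi
    _ = 1 := h
  have hmi1 : m i = 1 := le_antisymm hle hmi
  refine ⟨i, ?_⟩
  have hsub : m.support ⊆ {i} := by
    intro j hj
    rw [Finset.mem_singleton]
    by_contra hji
    have h2 : m i + m j ≤ ∑ k ∈ m.support, m k := by
      have hss : ({i, j} : Finset (Fin n)) ⊆ m.support := by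
        intro k hk
        rcases Finset.mem_insert.mp hk with rfl | hk
        · exact hi
        · rwa [Finset.mem_singleton.mp hk]
      calc m i + m j = ∑ k ∈ ({i, j} : Finset (Fin n)), m k :=
            (Finset.sum_pair (show i ≠ j from fun hh => hji hh.symm)).symm
      _ ≤ ∑ k ∈ m.support, m k := Finset.sum_le_sum_of_subset hss
    rw [hsum] at h
    have hmj : 1 ≤ m j := Nat.one_le_iff_ne_zero.mpr (Finsupp.mem_support_iff.mp hj)
    omega
  have := Finsupp.support_subset_singleton.mp hsub
  rwa [hmi1] at this

lemma rep_deg_le_one {n : ℕ} {p : MvPolynomial (Fin n) ℝ} (hp : p.totalDegree ≤ 1) :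
    p = MvPolynomial.C (p.coeff 0)
        + ∑ i, MvPolynomial.C (p.coeff (Finsupp.single i 1)) * MvPolynomial.X i := by
  ext m
  rw [MvPolynomial.coeff_add, MvPolynomial.coeff_C, MvPolynomial.coeff_sum]
  simp only [MvPolynomial.coeff_C_mul, MvPolynomial.coeff_X', mul_ite, mul_one, mul_zero]
  by_cases h0 : m = 0
  · subst h0
    rw [if_pos rfl, Finset.sum_eq_zero, add_zero]
    intro i _
    rw [if_neg (by simp)]
  · rw [if_neg (Ne.symm h0), zero_add]
    by_cases h1 : ∃ j, m = Finsupp.single j 1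
    · obtain ⟨j, rfl⟩ := h1
      have hs : (∑ x : Fin n, if Finsupp.single x 1 = Finsupp.single j 1
            then p.coeff (Finsupp.single x 1) else 0)
          = ∑ x : Fin n, if x = j then p.coeff (Finsupp.single x 1) else 0 :=
        Finset.sum_congr rfl fun i _ => if_congr (Finsupp.single_left_inj one_ne_zero) rfl rfl
      rw [hs, Finset.sum_ite_eq' Finset.univ j, if_pos (Finset.mem_univ j)]
    · have hdeg : 2 ≤ ∑ i ∈ m.support, m i := by
        by_contra hlt
        push_neg at hlt
        have h01 : (∑ i ∈ m.support, m i) = 0 ∨ (∑ i ∈ m.support, m i) = 1 := by omega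
        rcases h01 with hs | hs
        · apply h0
          rw [← Finsupp.support_eq_empty]
          rw [Finset.sum_eq_zero_iff] at hs
          exact Finset.eq_empty_of_forall_notMem fun j hj =>
            (Finsupp.mem_support_iff.mp hj) (hs j hj)
        · exact h1 (single_of_sum_eq_one hs)
      rw [MvPolynomial.coeff_eq_zero_of_totalDegree_lt (lt_of_le_of_lt hp (by omega)),
        Finset.sum_eq_zero]
      intro i _
      rw [if_neg]
      exact fun hh => h1 ⟨i, hh.symm⟩

lemma eval_deg_le_one {n : ℕ} {p : MvPolynomial (Fin n) ℝ} (hp : p.totalDegree ≤ 1)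
    (x : Fin n → ℝ) :
    MvPolynomial.eval x p = p.coeff 0 + ∑ i, p.coeff (Finsupp.single i 1) * x i := by
  conv_lhs => rw [rep_deg_le_one hp]
  simp [MvPolynomial.eval_C, MvPolynomial.eval_X, mul_comm]

lemma integral_eval {n : ℕ} (hn : n ≠ 0) {p : MvPolynomial (Fin n) ℝ}
    (hp : p.totalDegree ≤ 1) :
    ∫ y, MvPolynomial.eval (fun i => (y : E n) i) p ∂(sphereUnif n) = p.coeff 0 := by
  haveI := sphereUnif_prob n hn
  have hrw : ∀ y : sphere (0 : E n) 1, MvPolynomial.eval (fun i => (y : E n) i) p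
      = p.coeff 0 + ∑ i, p.coeff (Finsupp.single i 1) * (y : E n) i :=
    fun y => eval_deg_le_one hp _
  simp only [hrw]
  rw [integral_add (integrable_const _)
      (integrable_finset_sum _ fun i _ => ((integrable_coord n hn i).const_mul _)),
    integral_const, integral_finset_sum _ fun i _ => ((integrable_coord n hn i).const_mul _)]
  simp [integral_const_mul, integral_coord_zero, measure_univ]

/-- Proposition 6.2: for a `1`-stiff configuration `ω_N ⊂ S^d` with span `L`, the dual
`D_1(ω_N)` equals `L^⊥ ∩ S^d`; if `k = dim L ≤ d - 1` it is the unit sphere of the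
`(d+1-k)`-dimensional subspace `L^⊥`, and if `k = d` it is a pair `{a, -a}`, which is itself a
`1`-stiff configuration. -/
theorem dual_of_one_stiff (d : ℕ) (hd : 1 ≤ d) [DecidableEq (E (d + 1))]
    (X : Finset (E (d + 1))) (hne : X.Nonempty) (hstiff : IsStiff (d + 1) 1 X) :
    Dm (d + 1) 1 ↑X =
        ((Submodule.span ℝ (↑X : Set (E (d + 1))))ᗮ : Set (E (d + 1)))
          ∩ sphere (0 : E (d + 1)) 1 ∧
      ((Module.finrank ℝ (Submodule.span ℝ (↑X : Set (E (d + 1))))) ≤ d - 1 →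
        Module.finrank ℝ ((Submodule.span ℝ (↑X : Set (E (d + 1))))ᗮ)
          = d + 1 - Module.finrank ℝ (Submodule.span ℝ (↑X : Set (E (d + 1))))) ∧
      ((Module.finrank ℝ (Submodule.span ℝ (↑X : Set (E (d + 1))))) = d →
        ∃ a : E (d + 1), a ∈ sphere (0 : E (d + 1)) 1 ∧
          Dm (d + 1) 1 ↑X = {a, -a} ∧
          IsStiff (d + 1) 1 ({a, -a} : Finset (E (d + 1)))) := by
  classical
  obtain ⟨⟨hXs, hdes⟩, _⟩ := hstiff
  set L := Submodule.span ℝ (↑X : Set (E (d + 1))) with hL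
  have hn1 : (d + 1) ≠ 0 := Nat.succ_ne_zero d
  have hN0 : ((X.card : ℝ)) ≠ 0 :=
    Nat.cast_ne_zero.mpr (Finset.card_ne_zero_of_mem hne.choose_spec)
  have havg : ∀ z : E (d + 1), (∑ x ∈ X, ⟪z, x⟫) = 0 := by
    intro z
    set pz : MvPolynomial (Fin (d + 1)) ℝ := ∑ i, MvPolynomial.C (z i) * MvPolynomial.X i
      with hpz
    have hdeg : pz.totalDegree ≤ 1 := by
      refine le_trans (MvPolynomial.totalDegree_finset_sum _ _) ?_
      refine Finset.sup_le fun i _ => ?_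
      refine le_trans (MvPolynomial.totalDegree_mul _ _) ?_
      simp [MvPolynomial.totalDegree_C, MvPolynomial.totalDegree_X]
    have heval : ∀ x : E (d + 1), MvPolynomial.eval (fun i => x i) pz = ⟪z, x⟫ := by
      intro x
      rw [PiLp.inner_apply]
      simp [hpz]
      exact Finset.sum_congr rfl fun i _ => mul_comm _ _
    have hc0 : pz.coeff 0 = 0 := by
      simp [hpz, MvPolynomial.coeff_sum, MvPolynomial.coeff_C_mul, MvPolynomial.coeff_X']
    have hXeq := hdes pz (by simpa using hdeg)
    rw [integral_eval hn1 hdeg, hc0] at hXeq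
    rw [Finset.sum_congr rfl fun x _ => heval x] at hXeq
    rcases div_eq_zero_iff.mp hXeq with h | h
    · exact h
    · exact absurd h hN0
  have hclaim1 : Dm (d + 1) 1 ↑X = (↑Lᗮ : Set (E (d + 1))) ∩ sphere (0 : E (d + 1)) 1 := by
    ext z
    simp only [Dm, Set.mem_setOf_eq, Set.mem_inter_iff, SetLike.mem_coe]
    constructor
    · rintro ⟨hzs, T, hTcard, hT⟩
      obtain ⟨x0, hx0⟩ := hne
      have ht0 : ∀ x ∈ X, ⟪z, x⟫ = ⟪z, x0⟫ := fun x hx =>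
        Finset.card_le_one.mp hTcard _ (hT x hx) _ (hT x0 hx0)
      have hzx0 : ⟪z, x0⟫ = 0 := by
        have hs0 := havg z
        rw [Finset.sum_congr rfl ht0, Finset.sum_const, nsmul_eq_mul] at hs0
        rcases mul_eq_zero.mp hs0 with h | h
        · exact absurd h hN0
        · exact h
      refine ⟨?_, hzs⟩
      have hortho : L ⟂ Submodule.span ℝ {z} := by
        refine Submodule.isOrtho_span.mpr fun u hu v hv => ?_
        rw [Set.mem_singleton_iff] at hv
        subst hv
        rw [real_inner_comm, ht0 u hu]
        exact hzx0
      exact hortho.symm (Submodule.mem_span_singleton_self z)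
    · rintro ⟨hzperp, hzs⟩
      refine ⟨hzs, {0}, by simp, fun x hx => ?_⟩
      rw [Finset.mem_singleton, real_inner_comm]
      exact (Submodule.mem_orthogonal L z).mp hzperp x (Submodule.subset_span hx)
  refine ⟨hclaim1, ?_, ?_⟩
  · intro _
    have hh := L.finrank_add_finrank_orthogonal
    rw [finrank_euclideanSpace_fin] at hh
    omega
  · intro hk
    have hrank : Module.finrank ℝ Lᗮ = 1 := by
      have hh := L.finrank_add_finrank_orthogonal
      rw [finrank_euclideanSpace_fin] at hh
      omega
    obtain ⟨v, hvL, hv0⟩ : ∃ v ∈ Lᗮ, v ≠ 0 := by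
      have : Lᗮ ≠ ⊥ := by
        intro h
        rw [h, finrank_bot] at hrank
        exact one_ne_zero hrank.symm
      exact Submodule.exists_mem_ne_zero_of_ne_bot this
    set a := ‖v‖⁻¹ • v with ha
    have hanorm : ‖a‖ = 1 := norm_smul_inv_norm hv0
    have ha0 : a ≠ 0 := by
      intro h
      rw [h, norm_zero] at hanorm
      exact one_ne_zero hanorm.symm
    have haL : a ∈ Lᗮ := Lᗮ.smul_mem _ hvL
    have hspan : (Submodule.span ℝ {a} : Submodule ℝ (E (d + 1))) = Lᗮ := by
      apply Submodule.eq_of_le_of_finrank_le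
      · rw [Submodule.span_le, Set.singleton_subset_iff]
        exact haL
      · rw [hrank, finrank_span_singleton ha0]
    have hasph : a ∈ sphere (0 : E (d + 1)) 1 := by
      rw [mem_sphere_zero_iff_norm]; exact hanorm
    have hnegsph : -a ∈ sphere (0 : E (d + 1)) 1 := by
      rw [mem_sphere_zero_iff_norm, norm_neg]; exact hanorm
    have hna : a ≠ -a := by
      intro h
      apply ha0
      have h2 : (2 : ℝ) • a = 0 := by
        rw [two_smul]
        nth_rewrite 2 [h]
        exact add_neg_cancel a
      rcases smul_eq_zero.mp h2 with h' | h'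
      · norm_num at h'
      · exact h'
    have hDm : Dm (d + 1) 1 ↑X = ({a, -a} : Set (E (d + 1))) := by
      rw [hclaim1]
      ext z
      simp only [Set.mem_inter_iff, SetLike.mem_coe, Set.mem_insert_iff, Set.mem_singleton_iff]
      constructor
      · rintro ⟨hzperp, hzs⟩
        rw [← hspan] at hzperp
        obtain ⟨c, rfl⟩ := Submodule.mem_span_singleton.mp hzperp
        rw [mem_sphere_zero_iff_norm, norm_smul, hanorm, mul_one, Real.norm_eq_abs] at hzs
        rcases (abs_eq (le_of_lt one_pos)).mp hzs with rfl | rfl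
        · left; rw [one_smul]
        · right; rw [neg_smul, one_smul]
      · rintro (rfl | rfl)
        · exact ⟨haL, hasph⟩
        · exact ⟨Lᗮ.neg_mem haL, hnegsph⟩
    have hinner0 : ∀ x ∈ X, ⟪x, a⟫ = 0 := fun x hx =>
      (Submodule.mem_orthogonal L a).mp haL x (Submodule.subset_span hx)
    refine ⟨a, hasph, hDm, ⟨?_, ?_⟩, ?_⟩
    · -- subset of sphere
      intro y hy
      rw [Finset.coe_insert, Finset.coe_singleton, Set.mem_insert_iff,
        Set.mem_singleton_iff] at hy
      rcases hy with rfl | rfl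
      · exact hasph
      · exact hnegsph
    · -- design property
      intro p hp
      have hp1 : p.totalDegree ≤ 1 := by simpa using hp
      rw [integral_eval hn1 hp1, Finset.sum_pair hna, Finset.card_pair hna,
        eval_deg_le_one hp1, eval_deg_le_one hp1]
      have hnegi : ∀ i : Fin (d + 1), ((-a : E (d + 1)) i) = -(a i) := fun i => rfl
      simp only [hnegi, mul_neg]
      rw [Finset.sum_neg_distrib]
      push_cast
      ring
    · -- Dm nonempty for {a, -a}
      obtain ⟨x0, hx0⟩ := hne
      refine ⟨x0, hXs hx0, {0}, le_refl 1, fun x hx => ?_⟩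
      rw [Finset.coe_insert, Finset.coe_singleton, Set.mem_insert_iff,
        Set.mem_singleton_iff] at hx
      rw [Finset.mem_singleton]
      rcases hx with rfl | rfl
      · exact hinner0 x0 hx0
      · rw [inner_neg_right, hinner0 x0 hx0, neg_zero]
end
end

section
/- For any finite configuration ω_N ⊂ S^d, d ≥ 1, with D_m(ω_N) ≠ ∅ (m ≥ 1), the set D_m(ω_N) is antipodal (i.e., z ∈ D_m(ω_N) implies -z ∈ D_m(ω_N)). Moreover, if ω_N is m-stiff, then ω_N ⊂ D_m(D_m(ω_N)). -/
open MeasureTheory Metric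
open scoped RealInnerProductSpace

noncomputable section

open Set
open scoped Pointwise

section Aux

variable {n : ℕ}

/-- Restriction of a linear isometry equiv to the unit sphere, as a homeomorph. -/
def sphMap (g : E n ≃ₗᵢ[ℝ] E n) : sphere (0 : E n) 1 ≃ₜ sphere (0 : E n) 1 where
  toFun y := ⟨g y, mem_sphere_zero_iff_norm.2
    (by rw [g.norm_map]; exact mem_sphere_zero_iff_norm.1 y.2)⟩
  invFun y := ⟨g.symm y, mem_sphere_zero_iff_norm.2
    (by rw [g.symm.norm_map]; exact mem_sphere_zero_iff_norm.1 y.2)⟩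
  left_inv y := by ext; simp
  right_inv y := by ext; simp
  continuous_toFun := Continuous.subtype_mk (g.continuous.comp continuous_subtype_val) _
  continuous_invFun := Continuous.subtype_mk (g.symm.continuous.comp continuous_subtype_val) _

lemma sphMap_coe (g : E n ≃ₗᵢ[ℝ] E n) (y : sphere (0 : E n) 1) :
    (sphMap g y : E n) = g y := rfl

lemma coe_image_preimage (g : E n ≃ₗᵢ[ℝ] E n) (s : Set (sphere (0 : E n) 1)) :
    ((↑) '' (sphMap g ⁻¹' s) : Set (E n)) = g ⁻¹' ((↑) '' s) := by
  ext y
  constructor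
  · rintro ⟨u, hu, rfl⟩
    exact ⟨sphMap g u, hu, rfl⟩
  · rintro ⟨v, hv, hvy⟩
    have hy : y ∈ sphere (0 : E n) 1 := by
      have := v.2
      simp only [mem_sphere_zero_iff_norm] at this ⊢
      rw [← g.norm_map y, ← hvy, this]
    refine ⟨⟨y, hy⟩, ?_, rfl⟩
    show sphMap g ⟨y, hy⟩ ∈ s
    have : sphMap g ⟨y, hy⟩ = v := by ext; rw [sphMap_coe, hvy]
    rw [this]; exact hv

lemma smul_preimage (g : E n ≃ₗᵢ[ℝ] E n) (A : Set (E n)) :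
    Ioo (0:ℝ) 1 • (g ⁻¹' A) = g ⁻¹' (Ioo (0:ℝ) 1 • A) := by
  ext x
  constructor
  · rintro ⟨r, hr, y, hy, rfl⟩
    exact ⟨r, hr, g y, hy, by simp [_root_.map_smul]⟩
  · rintro ⟨r, hr, a, ha, hx⟩
    refine ⟨r, hr, g.symm a, by simpa using ha, ?_⟩
    apply g.injective
    simp only [_root_.map_smul] at *
    simp [← hx]

lemma toSphere_map (g : E n ≃ₗᵢ[ℝ] E n) :
    Measure.map (sphMap g) (volume : Measure (E n)).toSphere
      = (volume : Measure (E n)).toSphere := by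
  have hg : MeasurePreserving (⇑g) (volume : Measure (E n)) volume :=
    g.measurePreserving
  have hemb : MeasurableEmbedding (⇑g) :=
    g.toHomeomorph.measurableEmbedding
  ext s hs
  rw [Measure.map_apply (sphMap g).measurable hs,
    Measure.toSphere_apply' _ ((sphMap g).measurable hs),
    Measure.toSphere_apply' _ hs, coe_image_preimage, smul_preimage,
    hg.measure_preimage_emb hemb]

lemma sphereUnif_map (g : E n ≃ₗᵢ[ℝ] E n) :
    MeasurePreserving (sphMap g) (sphereUnif n) (sphereUnif n) := by
  refine ⟨(sphMap g).measurable, ?_⟩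
  unfold sphereUnif
  rw [Measure.map_smul, toSphere_map]

lemma integral_sphMap (g : E n ≃ₗᵢ[ℝ] E n) (f : sphere (0 : E n) 1 → ℝ) :
    ∫ y, f (sphMap g y) ∂(sphereUnif n) = ∫ y, f y ∂(sphereUnif n) :=
  (sphereUnif_map g).integral_comp (sphMap g).measurableEmbedding f

/-- The linear form `x ↦ ⟪z, x⟫` as a multivariate polynomial. -/
def linForm (z : E n) : MvPolynomial (Fin n) ℝ :=
  ∑ i, MvPolynomial.C (z i) * MvPolynomial.X i

lemma eval_linForm (z x : E n) :
    MvPolynomial.eval (fun i => x i) (linForm z) = ⟪z, x⟫ := by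
  simp [linForm, PiLp.inner_apply, RCLike.inner_apply, starRingEnd_apply]
  exact Finset.sum_congr rfl fun i _ => mul_comm _ _

lemma totalDegree_linForm (z : E n) : (linForm z).totalDegree ≤ 1 := by
  refine (MvPolynomial.totalDegree_finset_sum _ _).trans ?_
  refine Finset.sup_le fun i _ => ?_
  refine (MvPolynomial.totalDegree_mul _ _).trans ?_
  simp [MvPolynomial.totalDegree_X]

/-- Composition of a univariate polynomial with the linear form. -/
def qpoly (q : Polynomial ℝ) (z : E n) : MvPolynomial (Fin n) ℝ :=
  Polynomial.aeval (linForm z) q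

lemma eval_qpoly (q : Polynomial ℝ) (z x : E n) :
    MvPolynomial.eval (fun i => x i) (qpoly q z) = q.eval ⟪z, x⟫ := by
  rw [qpoly, ← eval_linForm z x]
  rw [Polynomial.aeval_def, Polynomial.eval₂_eq_sum_range, map_sum, Polynomial.eval_eq_sum_range]
  simp [MvPolynomial.eval_C]

lemma totalDegree_qpoly (q : Polynomial ℝ) (z : E n) :
    (qpoly q z).totalDegree ≤ q.natDegree := by
  rw [qpoly, Polynomial.aeval_def, Polynomial.eval₂_eq_sum_range]
  refine (MvPolynomial.totalDegree_finset_sum _ _).trans ?_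
  refine Finset.sup_le fun k hk => ?_
  refine (MvPolynomial.totalDegree_mul _ _).trans ?_
  have h1 : ((algebraMap ℝ (MvPolynomial (Fin n) ℝ)) (q.coeff k)).totalDegree = 0 := by
    rw [MvPolynomial.algebraMap_eq]; exact MvPolynomial.totalDegree_C _
  have h2 : ((linForm z : MvPolynomial (Fin n) ℝ) ^ k).totalDegree ≤ k :=
    (MvPolynomial.totalDegree_pow _ _).trans (by
      have := totalDegree_linForm z
      calc k * (linForm z).totalDegree ≤ k * 1 := Nat.mul_le_mul_left k this
        _ = k := Nat.mul_one k)
  have := Finset.mem_range.1 hk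
  omega

lemma exists_isometry (z z' : E n) (hz : ‖z‖ = 1) (hz' : ‖z'‖ = 1) :
    ∃ g : E n ≃ₗᵢ[ℝ] E n, g z' = z :=
  ⟨Submodule.reflection (ℝ ∙ (z' - z))ᗮ, Submodule.reflection_sub (hz'.trans hz.symm)⟩

/-- The sphere integral of `y ↦ q(⟪z, y⟫)` does not depend on the unit vector `z`. -/
lemma integral_indep (q : Polynomial ℝ) (z z' : E n)
    (hz : z ∈ sphere (0 : E n) 1) (hz' : z' ∈ sphere (0 : E n) 1) :
    ∫ y : sphere (0 : E n) 1, q.eval ⟪z, (y : E n)⟫ ∂(sphereUnif n)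
      = ∫ y : sphere (0 : E n) 1, q.eval ⟪z', (y : E n)⟫ ∂(sphereUnif n) := by
  rw [mem_sphere_zero_iff_norm] at hz hz'
  obtain ⟨g, hg⟩ := exists_isometry z z' hz hz'
  calc ∫ y : sphere (0 : E n) 1, q.eval ⟪z, (y : E n)⟫ ∂(sphereUnif n)
      = ∫ y : sphere (0 : E n) 1, q.eval ⟪z, (sphMap g y : E n)⟫ ∂(sphereUnif n) := by
        rw [integral_sphMap g (fun y => q.eval ⟪z, (y : E n)⟫)]
    _ = ∫ y : sphere (0 : E n) 1, q.eval ⟪z', (y : E n)⟫ ∂(sphereUnif n) := by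
        congr 1; funext y
        rw [sphMap_coe, ← hg, g.inner_map_map]

/-- Application of the design property to `y ↦ q(⟪z, y⟫)`. -/
lemma design_moment {m : ℕ} {X : Finset (E n)} (hdes : IsSphericalDesign n (2 * m - 1) X)
    (q : Polynomial ℝ) (hq : q.natDegree ≤ 2 * m - 1) (z : E n) :
    (∑ x ∈ X, q.eval ⟪z, x⟫) / (X.card : ℝ)
      = ∫ y : sphere (0 : E n) 1, q.eval ⟪z, (y : E n)⟫ ∂(sphereUnif n) := by
  have := hdes.2 (qpoly q z) ((totalDegree_qpoly q z).trans hq)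
  simpa only [eval_qpoly] using this

end Aux

section Main

variable {n : ℕ}

lemma card_image_le_of_Dm {m : ℕ} {X : Finset (E n)} {z : E n}
    (hz : z ∈ Dm n m ↑X) : (X.image (fun x => ⟪z, x⟫)).card ≤ m := by
  obtain ⟨-, T, hT, hmem⟩ := hz
  refine le_trans (Finset.card_le_card ?_) hT
  intro a ha
  obtain ⟨x, hx, rfl⟩ := Finset.mem_image.1 ha
  exact hmem x hx

/-- Key quadrature-uniqueness lemma: for a `(2m-1)`-design, the set of dot products with any
point of `D_m` is contained in the set of dot products with any other point of `D_m`. -/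
lemma image_subset_image {m : ℕ} (hm : 1 ≤ m) {X : Finset (E n)}
    (hdes : IsSphericalDesign n (2 * m - 1) X) {z z0 : E n}
    (hz : z ∈ Dm n m ↑X) (hz0 : z0 ∈ Dm n m ↑X) :
    X.image (fun x => ⟪z, x⟫) ⊆ X.image (fun x => ⟪z0, x⟫) := by
  classical
  set A := X.image (fun x => ⟪z, x⟫) with hA
  set B := X.image (fun x => ⟪z0, x⟫) with hB
  have hcardA : A.card ≤ m := card_image_le_of_Dm hz
  have hcardB : B.card ≤ m := card_image_le_of_Dm hz0
  intro t ht
  by_contra htB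
  -- the test polynomial
  set q : Polynomial ℝ :=
    (∏ b ∈ B, (Polynomial.X - Polynomial.C b)) *
      (∏ a ∈ A.erase t, (Polynomial.X - Polynomial.C a)) with hq
  have hmonic1 : (∏ b ∈ B, (Polynomial.X - Polynomial.C b)).Monic :=
    Polynomial.monic_prod_of_monic _ _ fun b _ => Polynomial.monic_X_sub_C b
  have hmonic2 : (∏ a ∈ A.erase t, (Polynomial.X - Polynomial.C a)).Monic :=
    Polynomial.monic_prod_of_monic _ _ fun a _ => Polynomial.monic_X_sub_C a
  have hdeg1 : (∏ b ∈ B, (Polynomial.X - Polynomial.C b)).natDegree = B.card := by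
    rw [Polynomial.natDegree_prod_of_monic _ _ fun b _ => Polynomial.monic_X_sub_C b]
    simp [Polynomial.natDegree_X_sub_C]
  have hdeg2 : (∏ a ∈ A.erase t, (Polynomial.X - Polynomial.C a)).natDegree
      = (A.erase t).card := by
    rw [Polynomial.natDegree_prod_of_monic _ _ fun a _ => Polynomial.monic_X_sub_C a]
    simp [Polynomial.natDegree_X_sub_C]
  have htA : t ∈ A := ht
  have hAcard_pos : 1 ≤ A.card := Finset.card_pos.2 ⟨t, htA⟩
  have herase : (A.erase t).card = A.card - 1 := Finset.card_erase_of_mem htA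
  have hdegq : q.natDegree ≤ 2 * m - 1 := by
    rw [hq, Polynomial.natDegree_mul hmonic1.ne_zero hmonic2.ne_zero, hdeg1, hdeg2, herase]
    omega
  -- evaluation at points of X via z0 vanishes
  have hz0sum : ∑ x ∈ X, q.eval ⟪z0, x⟫ = 0 := by
    refine Finset.sum_eq_zero fun x hx => ?_
    have hbx : ⟪z0, x⟫ ∈ B := Finset.mem_image_of_mem _ hx
    rw [hq, Polynomial.eval_mul, Polynomial.eval_prod]
    rw [Finset.prod_eq_zero hbx (by
      simp only [Polynomial.eval_sub, Polynomial.eval_X, Polynomial.eval_C, sub_self]), zero_mul]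
  -- design gives the same normalized sums
  have hNz : (∑ x ∈ X, q.eval ⟪z, x⟫) / (X.card : ℝ)
      = (∑ x ∈ X, q.eval ⟪z0, x⟫) / (X.card : ℝ) := by
    rw [design_moment hdes q hdegq z, design_moment hdes q hdegq z0]
    exact integral_indep q z z0 hz.1 hz0.1
  have hXne : X.Nonempty := by
    obtain ⟨x, hx, -⟩ := Finset.mem_image.1 htA
    exact ⟨x, hx⟩
  have hNpos : (0 : ℝ) < (X.card : ℝ) := by
    exact_mod_cast Finset.card_pos.2 hXne
  have hsum0 : ∑ x ∈ X, q.eval ⟪z, x⟫ = 0 := by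
    have := hNz
    rw [hz0sum, zero_div, div_eq_zero_iff] at this
    rcases this with h | h
    · exact h
    · exact absurd h hNpos.ne'
  -- but the sum via z is a positive multiple of q.eval t ≠ 0
  have hc : q.eval t ≠ 0 := by
    rw [hq, Polynomial.eval_mul, Polynomial.eval_prod, Polynomial.eval_prod]
    refine mul_ne_zero ?_ ?_
    · rw [Finset.prod_ne_zero_iff]
      intro b hb
      simp only [Polynomial.eval_sub, Polynomial.eval_X, Polynomial.eval_C, sub_ne_zero]
      rintro rfl; exact htB hb
    · rw [Finset.prod_ne_zero_iff]
      intro a ha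
      simp only [Polynomial.eval_sub, Polynomial.eval_X, Polynomial.eval_C, sub_ne_zero]
      rintro rfl; exact (Finset.mem_erase.1 ha).1 rfl
  have hsplit : ∑ x ∈ X, q.eval ⟪z, x⟫
      = ((X.filter (fun x => ⟪z, x⟫ = t)).card : ℝ) * q.eval t := by
    rw [← Finset.sum_filter_add_sum_filter_not X (fun x => ⟪z, x⟫ = t)]
    have h1 : ∑ x ∈ X.filter (fun x => ⟪z, x⟫ = t), q.eval ⟪z, x⟫
        = ((X.filter (fun x => ⟪z, x⟫ = t)).card : ℝ) * q.eval t := by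
      rw [Finset.sum_congr rfl (fun x hx => by
        rw [(Finset.mem_filter.1 hx).2]), Finset.sum_const, nsmul_eq_mul]
    have h2 : ∑ x ∈ X.filter (fun x => ¬ ⟪z, x⟫ = t), q.eval ⟪z, x⟫ = 0 := by
      refine Finset.sum_eq_zero fun x hx => ?_
      obtain ⟨hxX, hxt⟩ := Finset.mem_filter.1 hx
      have : ⟪z, x⟫ ∈ A.erase t :=
        Finset.mem_erase.2 ⟨hxt, Finset.mem_image_of_mem _ hxX⟩
      rw [hq, Polynomial.eval_mul]
      simp only [Polynomial.eval_prod]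
      rw [Finset.prod_eq_zero this (by
        simp only [Polynomial.eval_sub, Polynomial.eval_X, Polynomial.eval_C, sub_self]),
        mul_zero]
    rw [h1, h2, add_zero]
  have hfilter : 0 < (X.filter (fun x => ⟪z, x⟫ = t)).card := by
    obtain ⟨x, hx, hxt⟩ := Finset.mem_image.1 htA
    exact Finset.card_pos.2 ⟨x, Finset.mem_filter.2 ⟨hx, hxt⟩⟩
  rw [hsplit] at hsum0
  exact (mul_ne_zero (by exact_mod_cast hfilter.ne') hc) hsum0

end Main

/-- Proposition 6.4 (first parts): for any configuration `ω_N ⊂ S^d` with `D_m(ω_N) ≠ ∅`, the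
set `D_m(ω_N)` is antipodal; moreover if `ω_N` is `m`-stiff then `ω_N ⊆ D_m(D_m(ω_N))`. -/
theorem dual_antipodal_and_sub_double_dual (d m : ℕ) (hd : 1 ≤ d) (hm : 1 ≤ m)
    (X : Finset (E (d + 1))) (hX : (↑X : Set (E (d + 1))) ⊆ sphere (0 : E (d + 1)) 1)
    (hne : (Dm (d + 1) m ↑X).Nonempty) :
    (∀ z ∈ Dm (d + 1) m ↑X, -z ∈ Dm (d + 1) m ↑X) ∧
      (IsStiff (d + 1) m X →
        (↑X : Set (E (d + 1))) ⊆ Dm (d + 1) m (Dm (d + 1) m ↑X)) := by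
  constructor
  · rintro z ⟨hzs, T, hT, hmem⟩
    refine ⟨?_, T.image (fun t => -t), le_trans Finset.card_image_le hT, ?_⟩
    · rw [mem_sphere_zero_iff_norm] at hzs ⊢
      rw [norm_neg]; exact hzs
    · intro x hx
      have h : ⟪-z, x⟫ = -⟪z, x⟫ := inner_neg_left z x
      rw [h]
      exact Finset.mem_image_of_mem _ (hmem x hx)
  · intro hstiff x hx
    obtain ⟨z0, hz0⟩ := hne
    refine ⟨hX hx, X.image (fun y => ⟪z0, y⟫), card_image_le_of_Dm hz0, ?_⟩
    intro z hz
    have h := image_subset_image hm hstiff.1 hz hz0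
    have hxX : x ∈ X := hx
    have hmem : ⟪z, x⟫ ∈ X.image (fun y => ⟪z, y⟫) := Finset.mem_image_of_mem _ hxX
    rw [real_inner_comm]
    exact h hmem
end
end

section
/- Let ω_N ⊂ S^d, d ≥ 1, be an m-stiff configuration, m ≥ 1, such that its dual D_m(ω_N) is finite and itself m-stiff. Then D_m(D_m(D_m(ω_N))) = D_m(ω_N). -/
open MeasureTheory Metric
open scoped RealInnerProductSpace Pointwise

noncomputable section

def sphereHomeo {n : ℕ} (f : E n ≃ₗᵢ[ℝ] E n) : sphere (0 : E n) 1 ≃ₜ sphere (0 : E n) 1 where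
  toFun y := ⟨f y, by
    simpa [mem_sphere_zero_iff_norm] using mem_sphere_zero_iff_norm.mp y.2⟩
  invFun y := ⟨f.symm y, by
    simpa [mem_sphere_zero_iff_norm] using mem_sphere_zero_iff_norm.mp y.2⟩
  left_inv y := by simp
  right_inv y := by simp
  continuous_toFun := by
    exact (f.continuous.comp continuous_subtype_val).subtype_mk _
  continuous_invFun := by
    exact (f.symm.continuous.comp continuous_subtype_val).subtype_mk _

lemma map_toSphere {n : ℕ} (f : E n ≃ₗᵢ[ℝ] E n) :
    Measure.map (sphereHomeo f) (volume : Measure (E n)).toSphere =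
      (volume : Measure (E n)).toSphere := by
  refine Measure.ext fun s hs => ?_
  have hmeas : Measurable (sphereHomeo f) := (sphereHomeo f).continuous.measurable
  rw [Measure.map_apply hmeas hs, Measure.toSphere_apply' _ (hmeas hs),
    Measure.toSphere_apply' _ hs]
  congr 1
  have himg : (Subtype.val '' ((sphereHomeo f) ⁻¹' s)) = f ⁻¹' (Subtype.val '' s) := by
    ext v
    constructor
    · rintro ⟨u, hu, rfl⟩
      exact ⟨(sphereHomeo f) u, hu, rfl⟩
    · rintro ⟨w, hw, hwv⟩
      have hv : v ∈ sphere (0 : E n) 1 := by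
        have : ‖f v‖ = 1 := by rw [← hwv]; exact mem_sphere_zero_iff_norm.mp w.2
        rw [mem_sphere_zero_iff_norm, ← f.norm_map v, this]
      refine ⟨⟨v, hv⟩, ?_, rfl⟩
      show (sphereHomeo f) ⟨v, hv⟩ ∈ s
      have : (sphereHomeo f) ⟨v, hv⟩ = w := Subtype.ext hwv.symm
      rw [this]; exact hw
  rw [himg]
  have hsmul : Set.Ioo (0:ℝ) 1 • (f ⁻¹' (Subtype.val '' s)) =
      f ⁻¹' (Set.Ioo (0:ℝ) 1 • (Subtype.val '' s)) := by
    ext v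
    simp only [Set.mem_smul, Set.mem_preimage]
    constructor
    · rintro ⟨r, hr, a, ha, rfl⟩
      exact ⟨r, hr, f a, ha, (f.map_smul r a).symm⟩
    · rintro ⟨r, hr, b, hb, hrb⟩
      refine ⟨r, hr, f.symm b, by simpa using hb, ?_⟩
      apply f.injective
      rw [← hrb, f.map_smul]
      simp
  rw [hsmul]
  have hmp := f.measurePreserving
  calc volume (f ⁻¹' (Set.Ioo (0:ℝ) 1 • (Subtype.val '' s)))
      = (Measure.map f.toMeasurableEquiv volume) (Set.Ioo (0:ℝ) 1 • (Subtype.val '' s)) := by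
        rw [MeasurableEquiv.map_apply]; rfl
    _ = volume (Set.Ioo (0:ℝ) 1 • (Subtype.val '' s)) := by
        rw [show Measure.map f.toMeasurableEquiv (volume : Measure (E n)) = volume from hmp.map_eq]


lemma integral_sphereUnif_comp {n : ℕ} (f : E n ≃ₗᵢ[ℝ] E n) (g : sphere (0 : E n) 1 → ℝ) :
    ∫ y, g ((sphereHomeo f) y) ∂(sphereUnif n) = ∫ y, g y ∂(sphereUnif n) := by
  have h : MeasurePreserving (sphereHomeo f) (sphereUnif n) (sphereUnif n) := by
    refine ⟨(sphereHomeo f).continuous.measurable, ?_⟩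
    unfold sphereUnif
    rw [Measure.map_smul, map_toSphere]
  exact h.integral_comp (sphereHomeo f).measurableEmbedding g

lemma moment_inv {n : ℕ} (k : ℕ) (z z' : E n) (hz : ‖z‖ = 1) (hz' : ‖z'‖ = 1) :
    ∫ y, ⟪z, (y : E n)⟫ ^ k ∂(sphereUnif n) = ∫ y, ⟪z', (y : E n)⟫ ^ k ∂(sphereUnif n) := by
  set f : E n ≃ₗᵢ[ℝ] E n := Submodule.reflection (ℝ ∙ (z' - z))ᗮ with hf
  have hfz : f z' = z := Submodule.reflection_sub (by rw [hz', hz])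
  calc ∫ y, ⟪z, (y : E n)⟫ ^ k ∂(sphereUnif n)
      = ∫ y, ⟪z, ((sphereHomeo f) y : E n)⟫ ^ k ∂(sphereUnif n) :=
        (integral_sphereUnif_comp f (fun y => ⟪z, (y : E n)⟫ ^ k)).symm
    _ = ∫ y, ⟪z', (y : E n)⟫ ^ k ∂(sphereUnif n) := by
        refine integral_congr_ae (Filter.Eventually.of_forall fun y => ?_)
        show ⟪z, (f y : E n)⟫ ^ k = ⟪z', (y : E n)⟫ ^ k
        rw [← hfz, f.inner_map_map]


lemma design_pow_sum {n m : ℕ} {X : Finset (E n)} (hdes : IsSphericalDesign n (2 * m - 1) X)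
    {k : ℕ} (hk : k ≤ 2 * m - 1) {z z' : E n} (hz : ‖z‖ = 1) (hz' : ‖z'‖ = 1) :
    ∑ x ∈ X, ⟪z, x⟫ ^ k = ∑ x ∈ X, ⟪z', x⟫ ^ k := by
  rcases Finset.eq_empty_or_nonempty X with rfl | hXne
  · simp
  have hN : (X.card : ℝ) ≠ 0 := by
    simpa using Finset.card_ne_zero_of_mem hXne.choose_spec
  -- the polynomial (∑ i, z i * X i)^k
  have heval : ∀ (w : E n) (x : E n),
      MvPolynomial.eval (fun i => x i)
        ((∑ i, MvPolynomial.C (w i) * MvPolynomial.X i) ^ k) = ⟪w, x⟫ ^ k := by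
    intro w x
    simp [PiLp.inner_apply, RCLike.inner_apply, map_sum]
    congr 1
    exact Finset.sum_congr rfl fun i _ => mul_comm _ _
  have hdeg : ∀ w : E n,
      ((∑ i, MvPolynomial.C (w i) * MvPolynomial.X i) ^ k).totalDegree ≤ 2 * m - 1 := by
    intro w
    refine le_trans (MvPolynomial.totalDegree_pow _ _) (le_trans ?_ hk)
    have h1 : (∑ i, MvPolynomial.C (w i) * MvPolynomial.X i :
        MvPolynomial (Fin n) ℝ).totalDegree ≤ 1 := by
      refine le_trans (MvPolynomial.totalDegree_finset_sum _ _) ?_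
      refine Finset.sup_le fun i _ => ?_
      refine le_trans (MvPolynomial.totalDegree_mul _ _) ?_
      simp [MvPolynomial.totalDegree_X]
    calc k * (∑ i, MvPolynomial.C (w i) * MvPolynomial.X i :
        MvPolynomial (Fin n) ℝ).totalDegree ≤ k * 1 := Nat.mul_le_mul_left _ h1
      _ = k := by ring
  have h1 := hdes.2 _ (hdeg z)
  have h2 := hdes.2 _ (hdeg z')
  simp only [heval] at h1 h2
  have hint : ∫ y, ⟪z, (y : E n)⟫ ^ k ∂(sphereUnif n)
      = ∫ y, ⟪z', (y : E n)⟫ ^ k ∂(sphereUnif n) := moment_inv k z z' hz hz'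
  have := h1.trans (hint.trans h2.symm)
  field_simp at this
  exact this

lemma design_poly_sum {n m : ℕ} {X : Finset (E n)} (hdes : IsSphericalDesign n (2 * m - 1) X)
    (q : Polynomial ℝ) (hq : q.natDegree ≤ 2 * m - 1) {z z' : E n}
    (hz : ‖z‖ = 1) (hz' : ‖z'‖ = 1) :
    ∑ x ∈ X, q.eval ⟪z, x⟫ = ∑ x ∈ X, q.eval ⟪z', x⟫ := by
  have hev : ∀ t : ℝ, q.eval t = ∑ i ∈ Finset.range (q.natDegree + 1), q.coeff i * t ^ i :=
    fun t => by rw [Polynomial.eval_eq_sum_range]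
  simp only [hev]
  rw [Finset.sum_comm, Finset.sum_comm (s := X)]
  refine Finset.sum_congr rfl fun i hi => ?_
  rw [← Finset.mul_sum, ← Finset.mul_sum]
  congr 1
  exact design_pow_sum hdes (le_trans (Nat.lt_succ_iff.mp (Finset.mem_range.mp hi)) hq) hz hz'



lemma key {n m : ℕ} (hm : 1 ≤ m) {X : Finset (E n)} (hdes : IsSphericalDesign n (2 * m - 1) X)
    {z z₀ : E n} (hz : z ∈ Dm n m ↑X) (hz₀ : z₀ ∈ Dm n m ↑X) {x : E n} (hx : x ∈ X) :
    ⟪z, x⟫ ∈ X.image (fun x' => ⟪z₀, x'⟫) := by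
  by_contra hs
  set s : ℝ := ⟪z, x⟫ with hsdef
  set T₀ : Finset ℝ := X.image (fun x' => ⟪z₀, x'⟫) with hT₀
  set Tz : Finset ℝ := X.image (fun x' => ⟪z, x'⟫) with hTz
  obtain ⟨W, hWc, hWm⟩ := hz.2
  obtain ⟨W₀, hW₀c, hW₀m⟩ := hz₀.2
  have hTzc : Tz.card ≤ m := by
    refine le_trans (Finset.card_le_card ?_) hWc
    intro t ht
    obtain ⟨x', hx', rfl⟩ := Finset.mem_image.mp ht
    exact hWm x' (by exact_mod_cast hx')
  have hT₀c : T₀.card ≤ m := by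
    refine le_trans (Finset.card_le_card ?_) hW₀c
    intro t ht
    obtain ⟨x', hx', rfl⟩ := Finset.mem_image.mp ht
    exact hW₀m x' (by exact_mod_cast hx')
  set S : Finset ℝ := T₀ ∪ Tz with hS
  have hsS : s ∈ S := Finset.mem_union_right _ (Finset.mem_image_of_mem _ hx)
  set q : Polynomial ℝ := ∏ t ∈ S.erase s, (Polynomial.X - Polynomial.C t) with hq
  have hqdeg : q.natDegree ≤ 2 * m - 1 := by
    have h1 : q.natDegree = (S.erase s).card := by
      rw [hq, Polynomial.natDegree_prod]
      · simp
      · intro t _; exact Polynomial.X_sub_C_ne_zero t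
    rw [h1, Finset.card_erase_of_mem hsS]
    have : S.card ≤ 2 * m := le_trans (Finset.card_union_le _ _)
      (by omega)
    omega
  have hz1 : ‖z‖ = 1 := mem_sphere_zero_iff_norm.mp hz.1
  have hz₀1 : ‖z₀‖ = 1 := mem_sphere_zero_iff_norm.mp hz₀.1
  have hsum := design_poly_sum hdes q hqdeg hz1 hz₀1
  have hzero : ∀ t ∈ S, t ≠ s → q.eval t = 0 := by
    intro t ht hts
    rw [hq, Polynomial.eval_prod]
    exact Finset.prod_eq_zero (Finset.mem_erase.mpr ⟨hts, ht⟩) (by simp)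
  -- RHS is zero
  have hRHS : ∑ x' ∈ X, q.eval ⟪z₀, x'⟫ = 0 := by
    refine Finset.sum_eq_zero fun x' hx' => ?_
    refine hzero _ (Finset.mem_union_left _ (Finset.mem_image_of_mem _ hx')) ?_
    intro h
    exact hs (h ▸ Finset.mem_image_of_mem _ hx')
  -- LHS is nonzero
  have hqs : q.eval s ≠ 0 := by
    rw [hq, Polynomial.eval_prod]
    refine Finset.prod_ne_zero_iff.mpr fun t ht => ?_
    simp only [Polynomial.eval_sub, Polynomial.eval_X, Polynomial.eval_C]
    exact sub_ne_zero_of_ne (Ne.symm (Finset.mem_erase.mp ht).1)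
  have hLHS : ∑ x' ∈ X, q.eval ⟪z, x'⟫ =
      ((X.filter (fun x' => ⟪z, x'⟫ = s)).card : ℝ) * q.eval s := by
    rw [Finset.sum_congr rfl (g := fun x' => if ⟪z, x'⟫ = s then q.eval s else 0)
      (fun x' hx' => ?_)]
    · rw [Finset.sum_ite, Finset.sum_const, Finset.sum_const_zero, add_zero, nsmul_eq_mul]
    · split_ifs with h
      · rw [h]
      · exact hzero _ (Finset.mem_union_right _ (Finset.mem_image_of_mem _ hx')) h
  have hcard : 0 < (X.filter (fun x' => ⟪z, x'⟫ = s)).card :=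
    Finset.card_pos.mpr ⟨x, Finset.mem_filter.mpr ⟨hx, rfl⟩⟩
  rw [hLHS, hRHS] at hsum
  exact (mul_ne_zero (by exact_mod_cast hcard.ne') hqs) hsum


lemma Dm_antitone {n m : ℕ} {A B : Set (E n)} (h : A ⊆ B) : Dm n m B ⊆ Dm n m A := by
  rintro z ⟨hz1, T, hTc, hTm⟩
  exact ⟨hz1, T, hTc, fun x hx => hTm x (h hx)⟩

lemma subset_double_dual {n m : ℕ} (hm : 1 ≤ m) {W : Finset (E n)} (hW : IsStiff n m W) :
    (↑W : Set (E n)) ⊆ Dm n m (Dm n m ↑W) := by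
  obtain ⟨z₀, hz₀⟩ := hW.2
  obtain ⟨W₀, hW₀c, hW₀m⟩ := hz₀.2
  intro w hw
  refine ⟨hW.1.1 hw, W.image (fun x' => ⟪z₀, x'⟫), ?_, ?_⟩
  · refine le_trans (Finset.card_le_card ?_) hW₀c
    intro t ht
    obtain ⟨x', hx', rfl⟩ := Finset.mem_image.mp ht
    exact hW₀m x' (by exact_mod_cast hx')
  · intro z hz
    rw [real_inner_comm]
    exact key hm hW.1 hz hz₀ (by exact_mod_cast hw)



/-- Proposition 6.4 (last part): if `ω_N ⊂ S^d` is `m`-stiff and its dual `D_m(ω_N)` is finite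
and itself `m`-stiff, then `D_m(D_m(D_m(ω_N))) = D_m(ω_N)`. -/
theorem triple_dual_eq_dual (d m : ℕ) (hd : 1 ≤ d) (hm : 1 ≤ m)
    (X : Finset (E (d + 1))) (hstiff : IsStiff (d + 1) m X)
    (hfin : (Dm (d + 1) m ↑X).Finite)
    (hdualstiff : IsStiff (d + 1) m hfin.toFinset) :
    Dm (d + 1) m (Dm (d + 1) m (Dm (d + 1) m ↑X)) = Dm (d + 1) m ↑X := by
  apply Set.Subset.antisymm
  · exact Dm_antitone (subset_double_dual hm hstiff)
  · have hcoe : (↑hfin.toFinset : Set (E (d + 1))) = Dm (d + 1) m ↑X := hfin.coe_toFinset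
    have := subset_double_dual hm hdualstiff
    rw [hcoe] at this
    exact this
end
end

section
/- If ω_N is a 2-stiff configuration on S^d, d ≥ 1, then for every z ∈ D_2(ω_N), the set of dot products of z with points of ω_N is exactly D(z, ω_N) = {-1/√(d+1), 1/√(d+1)}. -/
open MeasureTheory Metric
open scoped RealInnerProductSpace

noncomputable section

open scoped Pointwise ENNReal

namespace TwoStiffAux

variable {n : ℕ}

/-- The map on the unit sphere induced by a linear isometry equivalence. -/
def sMap (e : E n ≃ₗᵢ[ℝ] E n) (y : sphere (0 : E n) 1) : sphere (0 : E n) 1 :=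
  ⟨e y, by
    have hy : ‖(y : E n)‖ = 1 := mem_sphere_zero_iff_norm.mp y.2
    simp [mem_sphere_zero_iff_norm, hy]⟩

lemma continuous_sMap (e : E n ≃ₗᵢ[ℝ] E n) : Continuous (sMap e) :=
  Continuous.subtype_mk (e.continuous.comp continuous_subtype_val) _

lemma volume_preimage (e : E n ≃ₗᵢ[ℝ] E n) (B : Set (E n)) :
    (volume : Measure (E n)) (e ⁻¹' B) = volume B := by
  have h := (e.measurePreserving).map_eq
  have h2 := e.toHomeomorph.toMeasurableEquiv.map_apply (μ := (volume : Measure (E n))) B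
  have : Measure.map (⇑e.toHomeomorph.toMeasurableEquiv) (volume : Measure (E n)) =
      Measure.map (⇑e) (volume : Measure (E n)) := rfl
  rw [this, h] at h2
  exact h2.symm

lemma map_toSphere (e : E n ≃ₗᵢ[ℝ] E n) :
    Measure.map (sMap e) (volume : Measure (E n)).toSphere
      = (volume : Measure (E n)).toSphere := by
  ext s hs
  rw [Measure.map_apply (continuous_sMap e).measurable hs,
    Measure.toSphere_apply' _ hs,
    Measure.toSphere_apply' _ ((continuous_sMap e).measurable hs)]
  have himg : (Subtype.val '' (sMap e ⁻¹' s)) = e ⁻¹' (Subtype.val '' s) := by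
    ext x
    constructor
    · rintro ⟨y, hy, rfl⟩
      exact ⟨sMap e y, hy, rfl⟩
    · rintro ⟨w, hw, hwx⟩
      have hx : x ∈ sphere (0 : E n) 1 := by
        have h1 : ‖e x‖ = 1 := by
          rw [← hwx]; exact mem_sphere_zero_iff_norm.mp w.2
        rw [mem_sphere_zero_iff_norm, ← e.norm_map]; exact h1
      refine ⟨⟨x, hx⟩, ?_, rfl⟩
      have : sMap e ⟨x, hx⟩ = w := Subtype.ext hwx.symm
      rw [Set.mem_preimage, this]; exact hw
  rw [himg]
  have hsmul : Set.Ioo (0:ℝ) 1 • (e ⁻¹' (Subtype.val '' s))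
      = e ⁻¹' (Set.Ioo (0:ℝ) 1 • (Subtype.val '' s)) := by
    ext x
    constructor
    · rintro ⟨r, hr, a, ha, rfl⟩
      exact ⟨r, hr, e a, ha, (e.map_smul r a).symm⟩
    · rintro ⟨r, hr, b, hb, hbx⟩
      refine ⟨r, hr, e.symm b, by simpa using hb, ?_⟩
      apply e.injective
      rw [e.map_smul]
      simp [hbx]
  rw [hsmul, volume_preimage]

end TwoStiffAux

section
namespace TwoStiffAux
variable {n : ℕ}

lemma toSphere_univ_pos (hn : 0 < n) :
    0 < (volume : Measure (E n)).toSphere Set.univ := by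
  rw [Measure.toSphere_apply_univ]
  have h1 : (0:ℝ≥0∞) < Module.finrank ℝ (E n) := by
    simp [finrank_euclideanSpace_fin]
    exact_mod_cast hn
  exact ENNReal.mul_pos h1.ne' (measure_ball_pos _ _ one_pos).ne'

lemma toSphere_univ_lt_top : (volume : Measure (E n)).toSphere Set.univ < ⊤ :=
  measure_lt_top _ _

instance (n : ℕ) [NeZero n] : IsProbabilityMeasure (sphereUnif n) := by
  constructor
  rw [sphereUnif, Measure.smul_apply, smul_eq_mul]
  exact ENNReal.inv_mul_cancel (toSphere_univ_pos (Nat.pos_of_ne_zero (NeZero.ne n))).ne'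
    toSphere_univ_lt_top.ne

lemma map_sphereUnif (e : E n ≃ₗᵢ[ℝ] E n) :
    Measure.map (sMap e) (sphereUnif n) = sphereUnif n := by
  rw [sphereUnif, Measure.map_smul, map_toSphere]

lemma integral_comp_sMap (e : E n ≃ₗᵢ[ℝ] E n) (g : sphere (0 : E n) 1 → ℝ)
    (hg : Continuous g) :
    ∫ y, g (sMap e y) ∂(sphereUnif n) = ∫ y, g y ∂(sphereUnif n) := by
  conv_rhs => rw [← map_sphereUnif e]
  rw [integral_map (continuous_sMap e).aemeasurable hg.aestronglyMeasurable.aemeasurable.aestronglyMeasurable]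

lemma integrable_cont [NeZero n] {g : sphere (0 : E n) 1 → ℝ} (hg : Continuous g) :
    Integrable g (sphereUnif n) := by
  have : CompactSpace (sphere (0 : E n) 1) := Metric.sphere.compactSpace _ _
  exact hg.integrable_of_hasCompactSupport
    ((isClosed_tsupport g).isCompact)

end TwoStiffAux
end

section
namespace TwoStiffAux
variable {n : ℕ}

lemma continuous_coord (i : Fin n) :
    Continuous (fun y : sphere (0 : E n) 1 => (y : E n) i) := by
  exact (EuclideanSpace.proj (𝕜 := ℝ) i).continuous.comp continuous_subtype_val

lemma continuous_innerz (z : E n) :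
    Continuous (fun y : sphere (0 : E n) 1 => ⟪z, (y : E n)⟫) :=
  Continuous.inner continuous_const continuous_subtype_val

lemma integral_inner_pow_odd [NeZero n] (z : E n) {k : ℕ} (hk : Odd k) :
    ∫ y, ⟪z, ((y : sphere (0 : E n) 1) : E n)⟫ ^ k ∂(sphereUnif n) = 0 := by
  set g : sphere (0 : E n) 1 → ℝ := fun y => ⟪z, (y : E n)⟫ ^ k with hg
  have hgc : Continuous g := (continuous_innerz z).pow k
  have h := integral_comp_sMap (LinearIsometryEquiv.neg ℝ) g hgc
  have hneg : ∀ y : sphere (0 : E n) 1, g (sMap (LinearIsometryEquiv.neg ℝ) y) = - g y := by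
    intro y
    have : ((sMap (LinearIsometryEquiv.neg ℝ) y : sphere (0 : E n) 1) : E n) = -(y : E n) := rfl
    rw [hg]
    simp only [this, inner_neg_right]
    exact hk.neg_pow _
  rw [show (fun y => g (sMap (LinearIsometryEquiv.neg ℝ) y)) = fun y => - g y from funext hneg,
    integral_neg] at h
  linarith [h]

/-- Sign flip at coordinate `i₀`. -/
def flipAt (i₀ : Fin n) : E n ≃ₗᵢ[ℝ] E n :=
  LinearIsometryEquiv.piLpCongrRight 2
    (fun i => if i = i₀ then LinearIsometryEquiv.neg ℝ else LinearIsometryEquiv.refl ℝ ℝ)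

lemma flipAt_apply (i₀ : Fin n) (x : E n) (j : Fin n) :
    flipAt i₀ x j = if j = i₀ then -(x j) else x j := by
  rw [flipAt, LinearIsometryEquiv.piLpCongrRight_apply]
  by_cases h : j = i₀
  · subst h; simp
  · simp [h]

/-- Coordinate swap as a linear isometry. -/
def swapAt (i j : Fin n) : E n ≃ₗᵢ[ℝ] E n :=
  LinearIsometryEquiv.piLpCongrLeft 2 ℝ ℝ (Equiv.swap i j)

lemma swapAt_apply (i j : Fin n) (x : E n) (l : Fin n) :
    swapAt i j x l = x (Equiv.swap i j l) := by
  rw [swapAt, LinearIsometryEquiv.piLpCongrLeft_apply]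
  rfl

def Mom (n : ℕ) (i j : Fin n) : ℝ :=
  ∫ y, ((y : sphere (0 : E n) 1) : E n) i * ((y : sphere (0 : E n) 1) : E n) j ∂(sphereUnif n)

lemma Mom_offdiag [NeZero n] {i j : Fin n} (hij : i ≠ j) : Mom n i j = 0 := by
  set g : sphere (0 : E n) 1 → ℝ := fun y => (y : E n) i * (y : E n) j with hg
  have hgc : Continuous g := (continuous_coord i).mul (continuous_coord j)
  have h := integral_comp_sMap (flipAt i) g hgc
  have hneg : ∀ y : sphere (0 : E n) 1, g (sMap (flipAt i) y) = - g y := by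
    intro y
    have hcoe : ((sMap (flipAt i) y : sphere (0 : E n) 1) : E n) = flipAt i (y : E n) := rfl
    rw [hg]
    simp only [hcoe, flipAt_apply]
    split_ifs with h1 h2
    · exact absurd h2 hij.symm
    · ring
    · exact absurd trivial h1
    · exact absurd trivial h1
  rw [show (fun y => g (sMap (flipAt i) y)) = fun y => - g y from funext hneg,
    integral_neg] at h
  have : Mom n i j = ∫ y, g y ∂(sphereUnif n) := rfl
  rw [this]; linarith [h]

lemma Mom_diag_eq [NeZero n] (i j : Fin n) : Mom n i i = Mom n j j := by
  set g : sphere (0 : E n) 1 → ℝ := fun y => (y : E n) i * (y : E n) i with hg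
  have hgc : Continuous g := (continuous_coord i).mul (continuous_coord i)
  have h := integral_comp_sMap (swapAt i j) g hgc
  have heq : ∀ y : sphere (0 : E n) 1, g (sMap (swapAt i j) y) = (y : E n) j * (y : E n) j := by
    intro y
    have hcoe : ((sMap (swapAt i j) y : sphere (0 : E n) 1) : E n) = swapAt i j (y : E n) := rfl
    rw [hg]
    simp only [hcoe, swapAt_apply]
    rw [Equiv.swap_apply_left]
  rw [show (fun y => g (sMap (swapAt i j) y))
      = fun y : sphere (0 : E n) 1 => (y : E n) j * (y : E n) j from funext heq] at h
  exact h.symm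

lemma sum_Mom_diag [NeZero n] : ∑ i : Fin n, Mom n i i = 1 := by
  simp only [Mom]
  rw [← integral_finset_sum _ (fun i _ =>
    integrable_cont (g := fun y : sphere (0 : E n) 1 => (y : E n) i * (y : E n) i)
      ((continuous_coord i).mul (continuous_coord i)))]
  have : ∀ y : sphere (0 : E n) 1,
      (∑ i : Fin n, (y : E n) i * (y : E n) i) = 1 := by
    intro y
    have h1 : ⟪(y : E n), (y : E n)⟫ = ∑ i : Fin n, (y : E n) i * (y : E n) i := by
      rw [PiLp.inner_apply]; simp [RCLike.inner_apply]
      exact Finset.sum_congr rfl fun i _ => sq _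
    have h2 : ‖(y : E n)‖ = 1 := mem_sphere_zero_iff_norm.mp y.2
    rw [← h1, real_inner_self_eq_norm_sq, h2, one_pow]
  rw [show (fun y : sphere (0 : E n) 1 => ∑ i : Fin n, (y : E n) i * (y : E n) i)
      = fun _ => (1:ℝ) from funext this]
  simp

lemma Mom_diag [NeZero n] (i : Fin n) : Mom n i i = 1 / n := by
  have h := sum_Mom_diag (n := n)
  rw [Finset.sum_congr rfl (fun j _ => Mom_diag_eq j i)] at h
  rw [Finset.sum_const, Finset.card_univ, Fintype.card_fin, nsmul_eq_mul] at h
  have hn : (n : ℝ) ≠ 0 := Nat.cast_ne_zero.mpr (NeZero.ne n)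
  field_simp at h ⊢
  linarith

end TwoStiffAux
end

section
namespace TwoStiffAux
open MvPolynomial
variable {n : ℕ}

lemma inner_sum (x y : E n) : ⟪x, y⟫ = ∑ i, x i * y i := by
  rw [PiLp.inner_apply]; simp [RCLike.inner_apply]
  exact Finset.sum_congr rfl fun i _ => mul_comm _ _

lemma integral_inner_sq [NeZero n] (z : E n) (hz : ‖z‖ = 1) :
    ∫ y, ⟪z, ((y : sphere (0 : E n) 1) : E n)⟫ ^ 2 ∂(sphereUnif n) = 1 / n := by
  have hpt : ∀ y : sphere (0 : E n) 1,
      ⟪z, (y : E n)⟫ ^ 2 = ∑ i, ∑ j, (z i * z j) * ((y : E n) i * (y : E n) j) := by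
    intro y
    rw [inner_sum, sq, Finset.sum_mul_sum]
    exact Finset.sum_congr rfl fun i _ => Finset.sum_congr rfl fun j _ => by ring
  rw [show (fun y : sphere (0 : E n) 1 => ⟪z, (y : E n)⟫ ^ 2)
      = fun y : sphere (0 : E n) 1 => ∑ i, ∑ j, (z i * z j) * ((y : E n) i * (y : E n) j)
      from funext hpt]
  rw [integral_finset_sum _ (fun i _ => integrable_cont
    (g := fun y : sphere (0 : E n) 1 => ∑ j, (z i * z j) * ((y : E n) i * (y : E n) j))
    (continuous_finset_sum _ fun j _ =>
      continuous_const.mul ((continuous_coord i).mul (continuous_coord j))))]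
  have hstep : ∀ i : Fin n,
      (∫ y, ∑ j, (z i * z j) * ((y : E n) i * (y : E n) j) ∂(sphereUnif n))
        = z i * z i * (1 / n) := by
    intro i
    rw [integral_finset_sum _ (fun j _ => integrable_cont
      (g := fun y : sphere (0 : E n) 1 => (z i * z j) * ((y : E n) i * (y : E n) j))
      (continuous_const.mul ((continuous_coord i).mul (continuous_coord j))))]
    have : ∀ j : Fin n,
        (∫ y, (z i * z j) * ((y : E n) i * (y : E n) j) ∂(sphereUnif n))
          = (z i * z j) * Mom n i j := fun j => integral_const_mul _ _
    rw [Finset.sum_congr rfl fun j _ => this j]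
    rw [Finset.sum_eq_single i]
    · rw [Mom_diag]
    · intro j _ hji
      rw [Mom_offdiag hji.symm, mul_zero]
    · intro h; exact absurd (Finset.mem_univ i) h
  rw [Finset.sum_congr rfl fun i _ => hstep i, ← Finset.sum_mul]
  have : ∑ i, z i * z i = 1 := by
    rw [← inner_sum, real_inner_self_eq_norm_sq, hz, one_pow]
  rw [this, one_mul]

def linPoly (n : ℕ) (z : E n) : MvPolynomial (Fin n) ℝ :=
  ∑ i, MvPolynomial.C (z i) * MvPolynomial.X i

lemma linPoly_pow_totalDegree (z : E n) (k : ℕ) :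
    ((linPoly n z) ^ k).totalDegree ≤ k := by
  refine le_trans (MvPolynomial.totalDegree_pow _ _) ?_
  have h1 : (linPoly n z).totalDegree ≤ 1 := by
    refine le_trans (MvPolynomial.totalDegree_finset_sum _ _) ?_
    refine Finset.sup_le fun i _ => ?_
    refine le_trans (MvPolynomial.totalDegree_mul _ _) ?_
    simp [MvPolynomial.totalDegree_C, MvPolynomial.totalDegree_X]
  calc k * (linPoly n z).totalDegree ≤ k * 1 := Nat.mul_le_mul_left k h1
  _ = k := by ring

lemma eval_linPoly_pow (z x : E n) (k : ℕ) :
    MvPolynomial.eval (fun i => x i) ((linPoly n z) ^ k) = ⟪z, x⟫ ^ k := by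
  rw [map_pow]
  congr 1
  rw [linPoly, map_sum, inner_sum]
  exact Finset.sum_congr rfl fun i _ => by simp

end TwoStiffAux
end


set_option maxHeartbeats 1000000 in
/-- Proposition 2.3 (case `m = 2`): if `ω_N` is a `2`-stiff configuration on `S^d`, then every
`z ∈ D_2(ω_N)` forms with the points of `ω_N` exactly the dot products `±1/√(d+1)`. -/
theorem two_stiff_dot_products (d : ℕ) (hd : 1 ≤ d) (X : Finset (E (d + 1)))
    (hstiff : IsStiff (d + 1) 2 X) :
    ∀ z ∈ Dm (d + 1) 2 ↑X,
      (fun x => ⟪z, x⟫) '' (↑X : Set (E (d + 1))) =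
        ({-(1 / Real.sqrt (d + 1)), 1 / Real.sqrt (d + 1)} : Set ℝ) := by
  classical
  haveI : NeZero (d + 1) := ⟨Nat.succ_ne_zero d⟩
  obtain ⟨⟨hsub, hdes⟩, -⟩ := hstiff
  intro z hz
  obtain ⟨hzs, T, hT2, hTmem⟩ := hz
  have hzn : ‖z‖ = 1 := mem_sphere_zero_iff_norm.mp hzs
  set c : ℝ := 1 / Real.sqrt (↑d + 1) with hc
  set D : ℝ := ((d + 1 : ℕ) : ℝ) with hD'
  have hD : D = (d : ℝ) + 1 := by rw [hD']; push_cast; ring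
  have hDpos : 0 < D := by rw [hD]; positivity
  have hcc : c * c = 1 / D := by
    rw [hc, hD, div_mul_div_comm, one_mul,
      Real.mul_self_sqrt (by positivity)]
  -- design equations for powers of the dot product
  have hdeq : ∀ k : ℕ, k ≤ 3 →
      (∑ x ∈ X, ⟪z, x⟫ ^ k) / (X.card : ℝ)
        = ∫ y, ⟪z, ((y : sphere (0 : E (d+1)) 1) : E (d+1))⟫ ^ k ∂(sphereUnif (d+1)) := by
    intro k hk
    have h := hdes ((TwoStiffAux.linPoly (d+1) z) ^ k)
      (le_trans (TwoStiffAux.linPoly_pow_totalDegree z k) (by omega))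
    rw [Finset.sum_congr rfl (fun x _ => TwoStiffAux.eval_linPoly_pow z x k)] at h
    rw [show (fun y : sphere (0 : E (d+1)) 1 =>
          MvPolynomial.eval (fun i => (y : E (d+1)) i) ((TwoStiffAux.linPoly (d+1) z) ^ k))
        = fun y : sphere (0 : E (d+1)) 1 => ⟪z, (y : E (d+1))⟫ ^ k
      from funext (fun y => TwoStiffAux.eval_linPoly_pow z (y : E (d+1)) k)] at h
    exact h
  -- nonemptiness of X
  have hN0 : X.card ≠ 0 := by
    intro hcard
    have hXe : X = ∅ := Finset.card_eq_zero.mp hcard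
    have h := hdes 1 (by simp)
    rw [hXe] at h
    simp at h
  have hNpos : (0 : ℝ) < (X.card : ℝ) := by
    exact_mod_cast Nat.pos_of_ne_zero hN0
  set f : E (d+1) → ℝ := fun x => ⟪z, x⟫ with hf
  set S : Finset ℝ := X.image f with hS
  have hfib : ∀ k : ℕ, (∑ x ∈ X, f x ^ k)
      = ∑ t ∈ S, ((X.filter (fun x => f x = t)).card : ℝ) * t ^ k := by
    intro k
    rw [← Finset.sum_fiberwise_of_maps_to' (fun x hx => Finset.mem_image_of_mem f hx)
      (fun t => t ^ k)]
    exact Finset.sum_congr rfl fun t _ => by rw [Finset.sum_const, nsmul_eq_mul]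
  have hcnt : ∀ t ∈ S, 0 < ((X.filter (fun x => f x = t)).card : ℝ) := by
    intro t ht
    obtain ⟨x, hx, rfl⟩ := Finset.mem_image.mp ht
    have hx' : x ∈ X.filter (fun x' => f x' = f x) := Finset.mem_filter.mpr ⟨hx, rfl⟩
    exact_mod_cast Finset.card_pos.mpr ⟨x, hx'⟩
  -- the three moment equations
  have I1 := TwoStiffAux.integral_inner_pow_odd (n := d+1) z (k := 1) ⟨0, by ring⟩
  have I3 := TwoStiffAux.integral_inner_pow_odd (n := d+1) z (k := 3) ⟨1, by ring⟩
  have I2 := TwoStiffAux.integral_inner_sq (n := d+1) z hzn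
  have hNne : (X.card : ℝ) ≠ 0 := ne_of_gt hNpos
  have E1 : ∑ x ∈ X, f x ^ 1 = 0 := by
    have h := hdeq 1 (by norm_num); rw [I1] at h
    rw [div_eq_iff hNne] at h; simp only [hf]; rw [h]; ring
  have E3 : ∑ x ∈ X, f x ^ 3 = 0 := by
    have h := hdeq 3 (by norm_num); rw [I3] at h
    rw [div_eq_iff hNne] at h; simp only [hf]; rw [h]; ring
  have E2 : ∑ x ∈ X, f x ^ 2 = 1 / D * (X.card : ℝ) := by
    have h := hdeq 2 (by norm_num); rw [I2] at h
    rw [div_eq_iff hNne] at h; simp only [hf]; rw [h, hD']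
  have E0 : ∑ t ∈ S, ((X.filter (fun x => f x = t)).card : ℝ) = (X.card : ℝ) := by
    have h := hfib 0
    simp only [pow_zero, mul_one] at h
    rw [← h]
    simp
  -- S has one or two elements
  have hSsubT : S ⊆ T := by
    intro t ht
    obtain ⟨x, hx, rfl⟩ := Finset.mem_image.mp ht
    exact hTmem x (Finset.mem_coe.mpr hx)
  have hScard : S.card ≤ 2 := le_trans (Finset.card_le_card hSsubT) hT2
  have hSne : S.Nonempty := (Finset.card_pos.mp (Nat.pos_of_ne_zero hN0)).image f
  have hgoal : (fun x => ⟪z, x⟫) '' (↑X : Set (E (d+1))) = (↑S : Set ℝ) := by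
    rw [hS, Finset.coe_image]
  rw [hgoal]
  -- case analysis on the cardinality of S
  rcases lt_or_ge S.card 2 with hlt | hge
  · -- |S| = 1 : impossible
    exfalso
    have h1 : S.card = 1 := le_antisymm (by omega) (Finset.card_pos.mpr hSne)
    obtain ⟨a, hSa⟩ := Finset.card_eq_one.mp h1
    set A : ℝ := ((X.filter (fun x => f x = a)).card : ℝ) with hA'
    have hA : 0 < A := hcnt a (by rw [hSa]; simp)
    have e1 : A * a = 0 := by
      have h := hfib 1; rw [hSa, Finset.sum_singleton, pow_one, E1] at h
      linarith [h]
    have e2 : A * a ^ 2 = 1 / D * (X.card : ℝ) := by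
      have h := hfib 2; rw [hSa, Finset.sum_singleton, E2] at h; linarith [h]
    have ha0 : a = 0 := by
      rcases mul_eq_zero.mp e1 with h | h
      · exact absurd h (ne_of_gt hA)
      · exact h
    have hpos : (0:ℝ) < 1 / D * (X.card : ℝ) := by positivity
    have hzero : (0:ℝ) = 1 / D * (X.card : ℝ) := by
      rw [← e2, ha0]; norm_num
    linarith
  · -- |S| = 2
    have h2 : S.card = 2 := le_antisymm hScard hge
    obtain ⟨a, b, hab, hSab⟩ := Finset.card_eq_two.mp h2
    set A : ℝ := ((X.filter (fun x => f x = a)).card : ℝ) with hA'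
    set B : ℝ := ((X.filter (fun x => f x = b)).card : ℝ) with hB'
    have hA : 0 < A := hcnt a (by rw [hSab]; simp)
    have hB : 0 < B := hcnt b (by rw [hSab]; simp)
    have hsum : ∀ k : ℕ, ∑ t ∈ S, ((X.filter (fun x => f x = t)).card : ℝ) * t ^ k
        = A * a ^ k + B * b ^ k := by
      intro k
      rw [hSab, Finset.sum_pair hab]
    have e1 : A * a + B * b = 0 := by
      have h := hfib 1; rw [hsum, E1] at h
      simpa [pow_one] using h.symm
    have e3 : A * a ^ 3 + B * b ^ 3 = 0 := by
      have h := hfib 3; rw [hsum, E3] at h; exact h.symm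
    have e2 : A * a ^ 2 + B * b ^ 2 = 1 / D * (X.card : ℝ) := by
      have h := hfib 2; rw [hsum, E2] at h; exact h.symm
    have e0 : A + B = (X.card : ℝ) := by
      have h := E0; rw [hSab, Finset.sum_pair hab] at h; exact h
    -- a and b are nonzero
    have ha0 : a ≠ 0 := by
      intro h0
      have hb3 : B * b ^ 3 = 0 := by rw [h0] at e3; simpa using e3
      have hb0 : b = 0 := by
        rcases mul_eq_zero.mp hb3 with h | h
        · exact absurd h (ne_of_gt hB)
        · exact pow_eq_zero_iff (by norm_num) |>.mp h
      exact hab (h0.trans hb0.symm)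
    have hb0 : b ≠ 0 := by
      intro h0
      have ha3 : A * a ^ 3 = 0 := by rw [h0] at e3; simpa using e3
      have ha00 : a = 0 := by
        rcases mul_eq_zero.mp ha3 with h | h
        · exact absurd h (ne_of_gt hA)
        · exact pow_eq_zero_iff (by norm_num) |>.mp h
      exact hab (ha00.trans h0.symm)
    -- b = -a
    have hfact : B * b * (b ^ 2 - a ^ 2) = 0 := by linear_combination e3 - a ^ 2 * e1
    have hsq : b ^ 2 = a ^ 2 := by
      rcases mul_eq_zero.mp hfact with h | h
      · rcases mul_eq_zero.mp h with h' | h'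
        · exact absurd h' (ne_of_gt hB)
        · exact absurd h' hb0
      · linarith [h]
    have hba : b = -a := by
      have hfac2 : (b - a) * (b + a) = 0 := by linear_combination hsq
      rcases mul_eq_zero.mp hfac2 with h | h
      · exact absurd (by linarith : b = a) (fun hh => hab hh.symm)
      · linarith
    -- A = B and a^2 = 1/D
    have hAB : A = B := by
      have : (A - B) * a = 0 := by rw [hba] at e1; linarith [e1]
      rcases mul_eq_zero.mp this with h | h
      · linarith
      · exact absurd h ha0
    have ha2 : a ^ 2 = 1 / D := by
      have he : A * a ^ 2 + B * b ^ 2 = 1 / D * (A + B) := by rw [e0]; exact e2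
      have key : (A + B) * (a ^ 2 - 1 / D) = 0 := by
        linear_combination he - B * hsq
      rcases mul_eq_zero.mp key with h | h
      · exact absurd h (by positivity)
      · linarith
    -- conclude a = ±c
    have hac : a = c ∨ a = -c := by
      have h : a * a = c * c := by rw [hcc, ← ha2]; ring
      exact mul_self_eq_mul_self_iff.mp h |>.imp id id
    rcases hac with h | h
    · -- a = c, b = -c
      have hfin : S = {c, -c} := by rw [hSab, hba, h]
      rw [hfin]
      simp only [Finset.coe_insert, Finset.coe_singleton]
      exact Set.pair_comm c (-c)
    · -- a = -c, b = c
      have hfin : S = {-c, c} := by rw [hSab, hba, h, neg_neg]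
      rw [hfin]
      simp only [Finset.coe_insert, Finset.coe_singleton]
end
end
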